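/- arXiv:2010.13937 — 12 statements merged into one kernel-verified Lean document; each statement's English description precedes it below -/
import Mathlib

section
/- Let π be a probability measure on [0,∞)² such that there is no vector v ∈ ℝ² with the property that π-almost every a ∈ [0,∞)² is a scalar multiple of v. Then for every x ∈ ℝ² with x₁ > 0 and x₂ > 0, the 2×2 real matrix M with entries M_{ij} = ∫ aᵢ aⱼ exp(-(a₁x₁ + a₂x₂)) dπ(a₁,a₂) (i,j ∈ {1,2}) is positive definite. (Consequently the Hessian of the SARA utility U(x;π) = -∫ exp(-(a₁x₁+a₂x₂)) dπ(a), which equals -M, is negative definite everywhere on the open positive orthant.) -/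
open MeasureTheory

private lemma sara_u_exp (u : ℝ) : u * Real.exp (-u) ≤ 1 := by
  rw [Real.exp_neg, ← div_eq_mul_inv, div_le_one (Real.exp_pos u)]
  linarith [Real.add_one_le_exp u]

private lemma sara_sq_exp (u : ℝ) (hu : 0 ≤ u) : u ^ 2 * Real.exp (-u) ≤ 4 := by
  have h1 := sara_u_exp (u / 2)
  have h2 : 0 ≤ (u / 2) * Real.exp (-(u / 2)) := by positivity
  have h3 : Real.exp (-u) = Real.exp (-(u / 2)) * Real.exp (-(u / 2)) := by
    rw [← Real.exp_add]; ring_nf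
  nlinarith [Real.exp_pos (-(u / 2))]

/-- Hessian part of Proposition 1: if `π` is a probability measure on `[0,∞)²` that is not
concentrated on a single ray, then for every `x` in the open positive orthant the matrix
`M_{ij} = ∫ aᵢaⱼ exp(-(a₁x₁+a₂x₂)) dπ(a)` is positive definite (so the Hessian `-M` of the
SARA utility is negative definite). -/
theorem sara_hessian_posDef (π : Measure (ℝ × ℝ)) [IsProbabilityMeasure π]
    (hsupp : π {a : ℝ × ℝ | 0 ≤ a.1 ∧ 0 ≤ a.2} = 1)
    (hray : ¬ ∃ v : ℝ × ℝ, ∀ᵐ a ∂π, ∃ c : ℝ, a = c • v)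
    (x : ℝ × ℝ) (hx1 : 0 < x.1) (hx2 : 0 < x.2) :
    Matrix.PosDef (Matrix.of fun i j : Fin 2 =>
      ∫ a, (![a.1, a.2] i) * (![a.1, a.2] j)
        * Real.exp (-(a.1 * x.1 + a.2 * x.2)) ∂π) := by
  have hm : 0 < min x.1 x.2 := lt_min hx1 hx2
  set m := min x.1 x.2 with hmdef
  -- almost every point has nonnegative coordinates
  have hS : MeasurableSet {a : ℝ × ℝ | 0 ≤ a.1 ∧ 0 ≤ a.2} :=
    (measurableSet_le measurable_const measurable_fst).inter
      (measurableSet_le measurable_const measurable_snd)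
  have hae : ∀ᵐ a ∂π, 0 ≤ a.1 ∧ 0 ≤ a.2 := by
    rw [ae_iff]
    have h0 : π {a : ℝ × ℝ | 0 ≤ a.1 ∧ 0 ≤ a.2}ᶜ = 0 :=
      (prob_compl_eq_zero_iff hS).2 hsupp
    simpa [Set.compl_setOf] using h0
  -- uniform bound
  have hbd : ∀ a : ℝ × ℝ, 0 ≤ a.1 → 0 ≤ a.2 →
      (a.1 + a.2) ^ 2 * Real.exp (-(a.1 * x.1 + a.2 * x.2)) ≤ 4 / m ^ 2 := by
    intro a h1 h2
    have hEle : Real.exp (-(a.1 * x.1 + a.2 * x.2)) ≤ Real.exp (-((a.1 + a.2) * m)) := by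
      apply Real.exp_le_exp.2
      have hmx1 : m ≤ x.1 := min_le_left _ _
      have hmx2 : m ≤ x.2 := min_le_right _ _
      nlinarith
    have hu := sara_sq_exp ((a.1 + a.2) * m) (by positivity)
    have hkey : (a.1 + a.2) ^ 2 * Real.exp (-((a.1 + a.2) * m)) ≤ 4 / m ^ 2 := by
      rw [le_div_iff₀ (by positivity : (0 : ℝ) < m ^ 2)]
      calc (a.1 + a.2) ^ 2 * Real.exp (-((a.1 + a.2) * m)) * m ^ 2
          = ((a.1 + a.2) * m) ^ 2 * Real.exp (-((a.1 + a.2) * m)) := by ring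
        _ ≤ 4 := hu
    nlinarith [Real.exp_pos (-(a.1 * x.1 + a.2 * x.2)), sq_nonneg (a.1 + a.2)]
  -- general integrability lemma
  have hInt : ∀ f : ℝ × ℝ → ℝ, Continuous f →
      (∀ a : ℝ × ℝ, 0 ≤ a.1 → 0 ≤ a.2 → |f a| ≤ (a.1 + a.2) ^ 2) →
      Integrable (fun a : ℝ × ℝ => f a * Real.exp (-(a.1 * x.1 + a.2 * x.2))) π := by
    intro f hf hfb
    have hEc : Continuous fun a : ℝ × ℝ => Real.exp (-(a.1 * x.1 + a.2 * x.2)) := by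
      fun_prop
    refine (integrable_const (4 / m ^ 2)).mono' ((hf.mul hEc).aestronglyMeasurable) ?_
    filter_upwards [hae] with a ha
    have h := hbd a ha.1 ha.2
    have hEpos : 0 < Real.exp (-(a.1 * x.1 + a.2 * x.2)) := Real.exp_pos _
    rw [Real.norm_eq_abs, abs_mul, abs_of_pos hEpos]
    have hfa := hfb a ha.1 ha.2
    nlinarith [abs_nonneg (f a)]
  have h11 : Integrable (fun a : ℝ × ℝ => a.1 * a.1 * Real.exp (-(a.1 * x.1 + a.2 * x.2))) π :=
    hInt _ (by fun_prop) (fun a h1 h2 => by rw [abs_of_nonneg (by positivity)]; nlinarith)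
  have h12 : Integrable (fun a : ℝ × ℝ => a.1 * a.2 * Real.exp (-(a.1 * x.1 + a.2 * x.2))) π :=
    hInt _ (by fun_prop) (fun a h1 h2 => by rw [abs_of_nonneg (by positivity)]; nlinarith)
  have h21 : Integrable (fun a : ℝ × ℝ => a.2 * a.1 * Real.exp (-(a.1 * x.1 + a.2 * x.2))) π :=
    hInt _ (by fun_prop) (fun a h1 h2 => by rw [abs_of_nonneg (by positivity)]; nlinarith)
  have h22 : Integrable (fun a : ℝ × ℝ => a.2 * a.2 * Real.exp (-(a.1 * x.1 + a.2 * x.2))) π :=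
    hInt _ (by fun_prop) (fun a h1 h2 => by rw [abs_of_nonneg (by positivity)]; nlinarith)
  rw [Matrix.posDef_iff_dotProduct_mulVec]
  constructor
  · -- Hermitian
    ext i j
    simp only [Matrix.conjTranspose_apply, Matrix.of_apply, star_trivial]
    congr 1
    funext a
    ring
  · intro v hv
    -- the quadratic form as an integral
    have hgeq : (fun a : ℝ × ℝ => (v 0 * a.1 + v 1 * a.2) ^ 2
          * Real.exp (-(a.1 * x.1 + a.2 * x.2)))
        = fun a : ℝ × ℝ =>
          v 0 * v 0 * (a.1 * a.1 * Real.exp (-(a.1 * x.1 + a.2 * x.2)))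
          + v 0 * v 1 * (a.1 * a.2 * Real.exp (-(a.1 * x.1 + a.2 * x.2)))
          + v 1 * v 0 * (a.2 * a.1 * Real.exp (-(a.1 * x.1 + a.2 * x.2)))
          + v 1 * v 1 * (a.2 * a.2 * Real.exp (-(a.1 * x.1 + a.2 * x.2))) := by
      funext a; ring
    have hg : Integrable (fun a : ℝ × ℝ => (v 0 * a.1 + v 1 * a.2) ^ 2
        * Real.exp (-(a.1 * x.1 + a.2 * x.2))) π := by
      rw [hgeq]
      exact (((h11.const_mul _).add (h12.const_mul _)).add (h21.const_mul _)).add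
        (h22.const_mul _)
    have hIg : ∫ a, (v 0 * a.1 + v 1 * a.2) ^ 2 * Real.exp (-(a.1 * x.1 + a.2 * x.2)) ∂π
        = v 0 * v 0 * ∫ a, a.1 * a.1 * Real.exp (-(a.1 * x.1 + a.2 * x.2)) ∂π
          + v 0 * v 1 * ∫ a, a.1 * a.2 * Real.exp (-(a.1 * x.1 + a.2 * x.2)) ∂π
          + v 1 * v 0 * ∫ a, a.2 * a.1 * Real.exp (-(a.1 * x.1 + a.2 * x.2)) ∂π
          + v 1 * v 1 * ∫ a, a.2 * a.2 * Real.exp (-(a.1 * x.1 + a.2 * x.2)) ∂π := by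
      have i1 : Integrable (fun a : ℝ × ℝ =>
          v 0 * v 0 * (a.1 * a.1 * Real.exp (-(a.1 * x.1 + a.2 * x.2)))) π :=
        h11.const_mul _
      have i2 : Integrable (fun a : ℝ × ℝ =>
          v 0 * v 1 * (a.1 * a.2 * Real.exp (-(a.1 * x.1 + a.2 * x.2)))) π :=
        h12.const_mul _
      have i3 : Integrable (fun a : ℝ × ℝ =>
          v 1 * v 0 * (a.2 * a.1 * Real.exp (-(a.1 * x.1 + a.2 * x.2)))) π :=
        h21.const_mul _
      have i4 : Integrable (fun a : ℝ × ℝ =>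
          v 1 * v 1 * (a.2 * a.2 * Real.exp (-(a.1 * x.1 + a.2 * x.2)))) π :=
        h22.const_mul _
      have i12 : Integrable (fun a : ℝ × ℝ =>
          v 0 * v 0 * (a.1 * a.1 * Real.exp (-(a.1 * x.1 + a.2 * x.2)))
          + v 0 * v 1 * (a.1 * a.2 * Real.exp (-(a.1 * x.1 + a.2 * x.2)))) π := i1.add i2
      have i123 : Integrable (fun a : ℝ × ℝ =>
          v 0 * v 0 * (a.1 * a.1 * Real.exp (-(a.1 * x.1 + a.2 * x.2)))
          + v 0 * v 1 * (a.1 * a.2 * Real.exp (-(a.1 * x.1 + a.2 * x.2)))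
          + v 1 * v 0 * (a.2 * a.1 * Real.exp (-(a.1 * x.1 + a.2 * x.2)))) π := i12.add i3
      rw [hgeq, integral_add i123 i4, integral_add i12 i3, integral_add i1 i2,
        integral_const_mul, integral_const_mul, integral_const_mul, integral_const_mul]
    -- positivity of the integral
    have hpos : 0 < ∫ a, (v 0 * a.1 + v 1 * a.2) ^ 2
        * Real.exp (-(a.1 * x.1 + a.2 * x.2)) ∂π := by
      rcases (integral_nonneg fun a => by positivity :
          0 ≤ ∫ a, (v 0 * a.1 + v 1 * a.2) ^ 2
            * Real.exp (-(a.1 * x.1 + a.2 * x.2)) ∂π).lt_or_eq with h | h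
      · exact h
      · exfalso
        have hzero := (integral_eq_zero_iff_of_nonneg (fun a => by positivity) hg).1 h.symm
        apply hray
        have hv0 : v 0 ≠ 0 ∨ v 1 ≠ 0 := by
          by_contra hc
          push_neg at hc
          exact hv (funext fun i => by fin_cases i <;> simp [hc.1, hc.2])
        refine ⟨(-(v 1), v 0), ?_⟩
        filter_upwards [hzero] with a ha
        have hexp : Real.exp (-(a.1 * x.1 + a.2 * x.2)) ≠ 0 := (Real.exp_pos _).ne'
        have hsq0 : (v 0 * a.1 + v 1 * a.2) ^ 2 = 0 := by
          have := (mul_eq_zero.1 ha).resolve_right hexp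
          exact this
        have hlin : v 0 * a.1 + v 1 * a.2 = 0 := by
          exact pow_eq_zero_iff (by norm_num) |>.1 hsq0
        by_cases h1 : v 1 = 0
        · have h0 : v 0 ≠ 0 := hv0.resolve_right (by simp [h1])
          have ha1 : a.1 = 0 := by
            have : v 0 * a.1 = 0 := by rw [h1] at hlin; linarith
            exact (mul_eq_zero.1 this).resolve_left h0
          refine ⟨a.2 / v 0, Prod.ext ?_ ?_⟩
          · simp [ha1, h1]
          · simp [div_mul_cancel₀, h0]
        · refine ⟨-(a.1 / v 1), Prod.ext ?_ ?_⟩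
          · simp [h1]
          · show a.2 = -(a.1 / v 1) * v 0
            field_simp
            linarith
    -- assemble
    have : dotProduct (star v) ((Matrix.of fun i j : Fin 2 =>
        ∫ a, (![a.1, a.2] i) * (![a.1, a.2] j)
          * Real.exp (-(a.1 * x.1 + a.2 * x.2)) ∂π).mulVec v)
        = ∫ a, (v 0 * a.1 + v 1 * a.2) ^ 2 * Real.exp (-(a.1 * x.1 + a.2 * x.2)) ∂π := by
      simp only [dotProduct, Matrix.mulVec, Fin.sum_univ_two, Matrix.of_apply,
        Pi.star_apply, star_trivial, Matrix.cons_val_zero, Matrix.cons_val_one,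
        Matrix.head_cons]
      rw [hIg]
      ring
    rw [this]
    exact hpos
end

section
/- Let π be a probability measure on [0,∞)² with bounded support, let p > 0 and y > 0 be reals, and suppose π({a : a₁ ≠ p·a₂}) > 0. Then the function h : ℝ → ℝ defined by h(t) = ∫ (a₁ - p·a₂) · exp(-(a₁ - p·a₂)·t) · exp(-a₂·y) dπ(a₁,a₂) is strictly antitone (strictly decreasing); in particular, h has at most one zero. -/
open MeasureTheory

lemma sara_integrable (π : Measure (ℝ × ℝ)) [IsProbabilityMeasure π]
    (hsupp : π {a : ℝ × ℝ | 0 ≤ a.1 ∧ 0 ≤ a.2} = 1)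
    (C : ℝ) (hC : π {a : ℝ × ℝ | a.1 ≤ C ∧ a.2 ≤ C} = 1)
    (p y : ℝ) (hp : 0 < p) (hy : 0 < y) (t : ℝ) :
    Integrable (fun a : ℝ × ℝ =>
      (a.1 - p * a.2) * Real.exp (-((a.1 - p * a.2) * t)) * Real.exp (-(a.2 * y))) π := by
  have hcont : Continuous (fun a : ℝ × ℝ =>
      (a.1 - p * a.2) * Real.exp (-((a.1 - p * a.2) * t)) * Real.exp (-(a.2 * y))) := by
    fun_prop
  refine ⟨hcont.aestronglyMeasurable, ?_⟩
  set K : ℝ := max C 0 + p * max C 0 with hK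
  have hK0 : 0 ≤ K := by positivity
  refine HasFiniteIntegral.of_bounded (C := K * Real.exp (K * |t|)) ?_
  have hA : ∀ᵐ a ∂π, a ∈ {a : ℝ × ℝ | 0 ≤ a.1 ∧ 0 ≤ a.2} := by
    rw [Filter.eventually_iff, mem_ae_iff, measure_compl ?_ (measure_ne_top _ _), Set.setOf_mem_eq, hsupp]
    · simp
    · exact (isClosed_le continuous_const continuous_fst).inter
        (isClosed_le continuous_const continuous_snd) |>.measurableSet
  have hB : ∀ᵐ a ∂π, a ∈ {a : ℝ × ℝ | a.1 ≤ C ∧ a.2 ≤ C} := by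
    rw [Filter.eventually_iff, mem_ae_iff, measure_compl ?_ (measure_ne_top _ _), Set.setOf_mem_eq, hC]
    · simp
    · exact (isClosed_le continuous_fst continuous_const).inter
        (isClosed_le continuous_snd continuous_const) |>.measurableSet
  filter_upwards [hA, hB] with a ha hb
  obtain ⟨h1, h2⟩ := ha
  obtain ⟨h3, h4⟩ := hb
  have hf : |a.1 - p * a.2| ≤ K := by
    rw [abs_le]
    constructor
    · nlinarith [le_max_left C (0:ℝ), le_max_right C (0:ℝ)]
    · nlinarith [le_max_left C (0:ℝ), le_max_right C (0:ℝ)]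
  have he1 : Real.exp (-((a.1 - p * a.2) * t)) ≤ Real.exp (K * |t|) := by
    apply Real.exp_le_exp.2
    calc -((a.1 - p * a.2) * t) ≤ |(a.1 - p * a.2) * t| := neg_le_abs _
    _ = |a.1 - p * a.2| * |t| := abs_mul _ _
    _ ≤ K * |t| := by apply mul_le_mul_of_nonneg_right hf (abs_nonneg _)
  have he2 : Real.exp (-(a.2 * y)) ≤ 1 := by
    apply Real.exp_le_one_iff.2
    nlinarith
  rw [norm_mul, norm_mul, Real.norm_eq_abs, Real.norm_eq_abs, Real.norm_eq_abs,
    abs_of_pos (Real.exp_pos _), abs_of_pos (Real.exp_pos _)]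
  calc |a.1 - p * a.2| * Real.exp (-((a.1 - p * a.2) * t)) * Real.exp (-(a.2 * y))
      ≤ K * Real.exp (K * |t|) * 1 := by
        apply mul_le_mul _ he2 (Real.exp_pos _).le (by positivity)
        exact mul_le_mul hf he1 (Real.exp_pos _).le hK0
    _ = K * Real.exp (K * |t|) := mul_one _

/-- The first-order-condition function of the SARA model,
`h(t) = ∫ (a₁ - p a₂) exp(-(a₁ - p a₂)t) exp(-a₂ y) dπ(a)`, is strictly decreasing when `π`
is a compactly supported probability measure on `[0,∞)²` with `π({a₁ ≠ p a₂}) > 0`;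
in particular it has at most one zero. -/
theorem sara_foc_strictAnti (π : Measure (ℝ × ℝ)) [IsProbabilityMeasure π]
    (hsupp : π {a : ℝ × ℝ | 0 ≤ a.1 ∧ 0 ≤ a.2} = 1)
    (hbdd : ∃ C : ℝ, π {a : ℝ × ℝ | a.1 ≤ C ∧ a.2 ≤ C} = 1)
    (p y : ℝ) (hp : 0 < p) (hy : 0 < y)
    (hne : 0 < π {a : ℝ × ℝ | a.1 ≠ p * a.2})
    (h : ℝ → ℝ)
    (hh : ∀ t : ℝ, h t =
      ∫ a, (a.1 - p * a.2) * Real.exp (-((a.1 - p * a.2) * t)) * Real.exp (-(a.2 * y)) ∂π) :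
    StrictAnti h ∧ ∀ t₁ t₂ : ℝ, h t₁ = 0 → h t₂ = 0 → t₁ = t₂ := by
  obtain ⟨C, hC⟩ := hbdd
  have hSA : StrictAnti h := by
    intro t₁ t₂ hlt
    have hint₁ := sara_integrable π hsupp C hC p y hp hy t₁
    have hint₂ := sara_integrable π hsupp C hC p y hp hy t₂
    have key : 0 < h t₁ - h t₂ := by
      rw [hh t₁, hh t₂, ← integral_sub hint₁ hint₂]
      set F : ℝ × ℝ → ℝ := fun a =>
        (a.1 - p * a.2) * Real.exp (-((a.1 - p * a.2) * t₁)) * Real.exp (-(a.2 * y)) -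
        (a.1 - p * a.2) * Real.exp (-((a.1 - p * a.2) * t₂)) * Real.exp (-(a.2 * y)) with hF
      have hpos : ∀ a : ℝ × ℝ, a.1 ≠ p * a.2 → 0 < F a := by
        intro a hne'
        have hf : a.1 - p * a.2 ≠ 0 := sub_ne_zero.2 hne'
        rcases lt_or_gt_of_ne hf with hneg | hposf
        · have : Real.exp (-((a.1 - p * a.2) * t₁)) < Real.exp (-((a.1 - p * a.2) * t₂)) := by
            apply Real.exp_lt_exp.2; nlinarith
          have he := Real.exp_pos (-(a.2 * y))
          simp only [hF]
          nlinarith [mul_pos (mul_pos_of_neg_of_neg hneg (sub_neg.mpr this)) he]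
        · have : Real.exp (-((a.1 - p * a.2) * t₂)) < Real.exp (-((a.1 - p * a.2) * t₁)) := by
            apply Real.exp_lt_exp.2; nlinarith
          have he := Real.exp_pos (-(a.2 * y))
          simp only [hF]
          nlinarith [mul_pos (mul_pos hposf (sub_pos.mpr this)) he]
      have hnonneg : ∀ a : ℝ × ℝ, 0 ≤ F a := by
        intro a
        by_cases hne' : a.1 = p * a.2
        · simp [hF, hne']
        · exact (hpos a hne').le
      rw [integral_pos_iff_support_of_nonneg hnonneg (hint₁.sub hint₂)]
      refine lt_of_lt_of_le hne (measure_mono ?_)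
      intro a ha
      exact (hpos a ha).ne'
    linarith
  exact ⟨hSA, fun t₁ t₂ h1 h2 => hSA.injective (h1.trans h2.symm)⟩
end

section
/- Let Φ₁, Φ₂, Φ₁*, Φ₂* : ℝ → (0,∞) be differentiable functions with Φⱼ(0) = Φⱼ*(0) = 1 for j = 1,2, and suppose the logarithmic derivatives (log Φⱼ)'(t) and (log Φⱼ*)'(t) are strictly negative for all t ≥ 0 and j = 1,2. Then the following are equivalent: (a) for all x₁, x₂ ≥ 0, (log Φ₁)'(x₁) · (log Φ₂*)'(x₂) = (log Φ₁*)'(x₁) · (log Φ₂)'(x₂); (b) there exists ν > 0 such that Φ₁*(t) = Φ₁(t)^ν and Φ₂*(t) = Φ₂(t)^ν for all t ≥ 0. -/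
lemma zero_on_Ici {f : ℝ → ℝ} (hf : Differentiable ℝ f)
    (hd : ∀ t : ℝ, 0 ≤ t → deriv f t = 0) (h0 : f 0 = 0) :
    ∀ t : ℝ, 0 ≤ t → f t = 0 := by
  intro t ht
  rcases eq_or_lt_of_le ht with h | h
  · rw [← h]; exact h0
  · have := constant_of_derivWithin_zero (f := f) (a := 0) (b := t)
      (hf.differentiableOn) ?_ t (Set.right_mem_Icc.2 ht)
    · rw [this, h0]
    · intro x hx
      rw [(hf x).derivWithin (uniqueDiffOn_Icc h x (Set.mem_Icc_of_Ico hx))]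
      exact hd x hx.1

lemma deriv_eq_on_Ici {f g : ℝ → ℝ} (hf : Differentiable ℝ f) (hg : Differentiable ℝ g)
    (h : ∀ s : ℝ, 0 ≤ s → f s = g s) {t : ℝ} (ht : 0 ≤ t) :
    deriv f t = deriv g t := by
  have hu : UniqueDiffWithinAt ℝ (Set.Ici (0:ℝ)) t := uniqueDiffOn_Ici 0 t ht
  rw [← (hf t).derivWithin hu, ← (hg t).derivWithin hu]
  exact derivWithin_congr (fun x hx => h x hx) (h t ht)

/-- Proposition 6: under independence, `(Φ₁,Φ₂)` and `(Φ₁*,Φ₂*)` yield the same marginal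
rate of substitution everywhere on the nonnegative orthant if and only if
`Φ₁* = Φ₁^ν` and `Φ₂* = Φ₂^ν` on `[0,∞)` for some `ν > 0`. -/
theorem sara_independent_identification (Φ₁ Φ₂ Φ₁s Φ₂s : ℝ → ℝ)
    (hΦ₁ : Differentiable ℝ Φ₁) (hΦ₂ : Differentiable ℝ Φ₂)
    (hΦ₁s : Differentiable ℝ Φ₁s) (hΦ₂s : Differentiable ℝ Φ₂s)
    (hpos₁ : ∀ t : ℝ, 0 < Φ₁ t) (hpos₂ : ∀ t : ℝ, 0 < Φ₂ t)
    (hpos₁s : ∀ t : ℝ, 0 < Φ₁s t) (hpos₂s : ∀ t : ℝ, 0 < Φ₂s t)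
    (h0₁ : Φ₁ 0 = 1) (h0₂ : Φ₂ 0 = 1) (h0₁s : Φ₁s 0 = 1) (h0₂s : Φ₂s 0 = 1)
    (hneg₁ : ∀ t : ℝ, 0 ≤ t → deriv (fun s => Real.log (Φ₁ s)) t < 0)
    (hneg₂ : ∀ t : ℝ, 0 ≤ t → deriv (fun s => Real.log (Φ₂ s)) t < 0)
    (hneg₁s : ∀ t : ℝ, 0 ≤ t → deriv (fun s => Real.log (Φ₁s s)) t < 0)
    (hneg₂s : ∀ t : ℝ, 0 ≤ t → deriv (fun s => Real.log (Φ₂s s)) t < 0) :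
    (∀ x₁ x₂ : ℝ, 0 ≤ x₁ → 0 ≤ x₂ →
        deriv (fun s => Real.log (Φ₁ s)) x₁ * deriv (fun s => Real.log (Φ₂s s)) x₂ =
        deriv (fun s => Real.log (Φ₁s s)) x₁ * deriv (fun s => Real.log (Φ₂ s)) x₂) ↔
      (∃ ν : ℝ, 0 < ν ∧ ∀ t : ℝ, 0 ≤ t → Φ₁s t = Φ₁ t ^ ν ∧ Φ₂s t = Φ₂ t ^ ν) := by
  have hL₁ : Differentiable ℝ (fun s => Real.log (Φ₁ s)) :=
    hΦ₁.log (fun t => (hpos₁ t).ne')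
  have hL₂ : Differentiable ℝ (fun s => Real.log (Φ₂ s)) :=
    hΦ₂.log (fun t => (hpos₂ t).ne')
  have hL₁s : Differentiable ℝ (fun s => Real.log (Φ₁s s)) :=
    hΦ₁s.log (fun t => (hpos₁s t).ne')
  have hL₂s : Differentiable ℝ (fun s => Real.log (Φ₂s s)) :=
    hΦ₂s.log (fun t => (hpos₂s t).ne')
  constructor
  · intro h
    set a : ℝ → ℝ := fun x => deriv (fun s => Real.log (Φ₁ s)) x with ha
    set as : ℝ → ℝ := fun x => deriv (fun s => Real.log (Φ₁s s)) x with has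
    set b : ℝ → ℝ := fun x => deriv (fun s => Real.log (Φ₂ s)) x with hb
    set bs : ℝ → ℝ := fun x => deriv (fun s => Real.log (Φ₂s s)) x with hbs
    have ha0 : a 0 ≠ 0 := (hneg₁ 0 le_rfl).ne
    have hb0 : b 0 ≠ 0 := (hneg₂ 0 le_rfl).ne
    refine ⟨as 0 / a 0, div_pos_iff.2 (Or.inr ⟨hneg₁s 0 le_rfl, hneg₁ 0 le_rfl⟩), ?_⟩
    set ν : ℝ := as 0 / a 0 with hνdef
    -- proportionality of the log-derivatives
    have key1 : ∀ x : ℝ, 0 ≤ x → as x = ν * a x := by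
      intro x hx
      have e1 : a x * bs 0 = as x * b 0 := h x 0 hx le_rfl
      have e2 : a 0 * bs 0 = as 0 * b 0 := h 0 0 le_rfl le_rfl
      have hmul : as x * a 0 * b 0 = as 0 * a x * b 0 := by
        linear_combination a x * e2 - a 0 * e1
      have : as x * a 0 = as 0 * a x := mul_right_cancel₀ hb0 hmul
      rw [hνdef, div_mul_eq_mul_div, eq_div_iff ha0]
      linarith [this]
    have key2 : ∀ y : ℝ, 0 ≤ y → bs y = ν * b y := by
      intro y hy
      have e : a 0 * bs y = as 0 * b y := h 0 y le_rfl hy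
      rw [hνdef, div_mul_eq_mul_div, eq_div_iff ha0]
      linarith [e]
    -- integrate the proportionality
    have main : ∀ (Φ Φs : ℝ → ℝ), Differentiable ℝ Φ → Differentiable ℝ Φs →
        (∀ t, 0 < Φ t) → (∀ t, 0 < Φs t) → Φ 0 = 1 → Φs 0 = 1 →
        (∀ x : ℝ, 0 ≤ x → deriv (fun s => Real.log (Φs s)) x
            = ν * deriv (fun s => Real.log (Φ s)) x) →
        ∀ t : ℝ, 0 ≤ t → Φs t = Φ t ^ ν := by
      intro Φ Φs hΦ hΦs hpos hposs h0 h0s hkey t ht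
      have hdL : Differentiable ℝ (fun s => Real.log (Φ s)) :=
        hΦ.log (fun u => (hpos u).ne')
      have hdLs : Differentiable ℝ (fun s => Real.log (Φs s)) :=
        hΦs.log (fun u => (hposs u).ne')
      have hzero : ∀ t : ℝ, 0 ≤ t →
          (fun s => Real.log (Φs s) - ν * Real.log (Φ s)) t = 0 := by
        apply zero_on_Ici (hdLs.sub (hdL.const_mul ν))
        · intro u hu
          rw [deriv_sub (hdLs u) ((hdL.const_mul ν) u), deriv_const_mul ν (hdL u)]
          rw [hkey u hu]; ring
        · simp [h0, h0s]
      have hlog : Real.log (Φs t) = ν * Real.log (Φ t) := by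
        have := hzero t ht
        simpa [sub_eq_zero] using this
      calc Φs t = Real.exp (Real.log (Φs t)) := (Real.exp_log (hposs t)).symm
        _ = Real.exp (Real.log (Φ t) * ν) := by rw [hlog]; ring_nf
        _ = Φ t ^ ν := (Real.rpow_def_of_pos (hpos t) ν).symm
    intro t ht
    exact ⟨main Φ₁ Φ₁s hΦ₁ hΦ₁s hpos₁ hpos₁s h0₁ h0₁s key1 t ht,
      main Φ₂ Φ₂s hΦ₂ hΦ₂s hpos₂ hpos₂s h0₂ h0₂s key2 t ht⟩
  · rintro ⟨ν, hν, hmem⟩ x₁ x₂ hx₁ hx₂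
    have hl1 : ∀ s : ℝ, 0 ≤ s →
        Real.log (Φ₁s s) = ν * Real.log (Φ₁ s) := by
      intro s hs; rw [(hmem s hs).1, Real.log_rpow (hpos₁ s)]
    have hl2 : ∀ s : ℝ, 0 ≤ s →
        Real.log (Φ₂s s) = ν * Real.log (Φ₂ s) := by
      intro s hs; rw [(hmem s hs).2, Real.log_rpow (hpos₂ s)]
    have hd1 : deriv (fun s => Real.log (Φ₁s s)) x₁
        = ν * deriv (fun s => Real.log (Φ₁ s)) x₁ := by
      rw [deriv_eq_on_Ici hL₁s (hL₁.const_mul ν) hl1 hx₁,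
        deriv_const_mul ν (hL₁ x₁)]
    have hd2 : deriv (fun s => Real.log (Φ₂s s)) x₂
        = ν * deriv (fun s => Real.log (Φ₂ s)) x₂ := by
      rw [deriv_eq_on_Ici hL₂s (hL₂.const_mul ν) hl2 hx₂,
        deriv_const_mul ν (hL₂ x₂)]
    rw [hd1, hd2]; ring
end

section
/- Let A₁ be a bounded nonnegative random variable, let x₁ ≥ 0, and let S : [0,∞) → (0,1] be continuously differentiable. Define M(t) = E[A₁ · S(x₁ + A₁t)] / E[S(x₁ + A₁t)] for t ≥ 0. Then M(0) = E[A₁], and the right derivative of M at 0 exists and equals (S'(x₁)/S(x₁)) · Var(A₁). -/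
open MeasureTheory Metric

/-- Computational core of Proposition 7: for a bounded nonnegative random variable `A₁`,
`x₁ ≥ 0`, and a continuously differentiable survival function `S` with values in `(0,1]`,
the SSF marginal rate of substitution `M(t) = E[A₁ S(x₁+A₁t)]/E[S(x₁+A₁t)]` satisfies
`M(0) = E[A₁]` and its right derivative at `0` equals `(S'(x₁)/S(x₁))·Var(A₁)`. -/
theorem ssf_mrs_deriv_at_zero {Ω : Type*} [MeasurableSpace Ω]
    (μ : Measure Ω) [IsProbabilityMeasure μ]
    (A : Ω → ℝ) (hA : Measurable A) (hA0 : ∀ ω, 0 ≤ A ω)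
    (hAbdd : ∃ C : ℝ, ∀ ω, A ω ≤ C)
    (x₁ : ℝ) (hx₁ : 0 ≤ x₁)
    (S : ℝ → ℝ) (hS : ContDiff ℝ 1 S)
    (hSrange : ∀ t : ℝ, 0 ≤ t → 0 < S t ∧ S t ≤ 1)
    (M : ℝ → ℝ)
    (hM : ∀ t : ℝ, M t =
      (∫ ω, A ω * S (x₁ + A ω * t) ∂μ) / (∫ ω, S (x₁ + A ω * t) ∂μ)) :
    M 0 = ∫ ω, A ω ∂μ ∧
      HasDerivWithinAt M
        ((deriv S x₁ / S x₁) * ∫ ω, (A ω - ∫ ω', A ω' ∂μ) ^ 2 ∂μ)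
        (Set.Ici 0) 0 := by
  obtain ⟨C₀, hC₀⟩ := hAbdd
  set C : ℝ := max C₀ 0 with hCdef
  have hC0 : (0:ℝ) ≤ C := le_max_right _ _
  have hAC : ∀ ω, |A ω| ≤ C := fun ω => by
    rw [abs_of_nonneg (hA0 ω)]; exact le_trans (hC₀ ω) (le_max_left _ _)
  have hScont : Continuous S := hS.continuous
  have hS'cont : Continuous (deriv S) := hS.continuous_deriv le_rfl
  have hSx₁ : 0 < S x₁ := (hSrange x₁ hx₁).1
  -- bounds on S and deriv S on the compact interval
  obtain ⟨B₁, hB₁⟩ := (isCompact_Icc (a := x₁ - C) (b := x₁ + C)).exists_bound_of_continuousOn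
    hScont.continuousOn
  obtain ⟨B₂, hB₂⟩ := (isCompact_Icc (a := x₁ - C) (b := x₁ + C)).exists_bound_of_continuousOn
    hS'cont.continuousOn
  have hmem : ∀ (ω : Ω) (t : ℝ), t ∈ ball (0:ℝ) 1 → x₁ + A ω * t ∈ Set.Icc (x₁ - C) (x₁ + C) := by
    intro ω t ht
    rw [mem_ball, dist_zero_right, Real.norm_eq_abs] at ht
    have h1 : |A ω * t| ≤ C := by
      rw [abs_mul]
      calc |A ω| * |t| ≤ C * 1 :=
        mul_le_mul (hAC ω) ht.le (abs_nonneg _) hC0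
      _ = C := mul_one C
    constructor <;> [linarith [neg_le_of_abs_le h1]; linarith [le_of_abs_le h1]]
  -- measurability
  have hmeasS : ∀ t : ℝ, AEStronglyMeasurable (fun ω => S (x₁ + A ω * t)) μ :=
    fun t => ((hScont.measurable.comp ((measurable_const.add (hA.mul measurable_const))))).aestronglyMeasurable
  have hmeasS' : ∀ t : ℝ, AEStronglyMeasurable (fun ω => deriv S (x₁ + A ω * t)) μ :=
    fun t => ((hS'cont.measurable.comp ((measurable_const.add (hA.mul measurable_const))))).aestronglyMeasurable
  -- integrability of bounded measurable functions
  have hintbdd : ∀ (f : Ω → ℝ), AEStronglyMeasurable f μ → ∀ (c : ℝ), (∀ ω, |f ω| ≤ c) →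
      Integrable f μ := by
    intro f hf c hc
    exact (integrable_const c).mono' hf (ae_of_all _ fun ω => by
      simpa [Real.norm_eq_abs] using hc ω)
  have hintA : Integrable A μ := hintbdd A hA.aestronglyMeasurable C hAC
  have hintA2 : Integrable (fun ω => A ω ^ 2) μ := by
    refine hintbdd _ ((hA.pow_const 2).aestronglyMeasurable) (C^2) (fun ω => ?_)
    rw [abs_pow]
    exact pow_le_pow_left₀ (abs_nonneg _) (hAC ω) 2
  -- the inner derivative
  have hinner : ∀ (ω : Ω) (t : ℝ),
      HasDerivAt (fun s => S (x₁ + A ω * s)) (A ω * deriv S (x₁ + A ω * t)) t := by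
    intro ω t
    have h1 : HasDerivAt (fun s : ℝ => x₁ + A ω * s) (A ω) t := by
      simpa using ((hasDerivAt_id t).const_mul (A ω)).const_add x₁
    have h2 : HasDerivAt S (deriv S (x₁ + A ω * t)) (x₁ + A ω * t) :=
      (hS.differentiable one_ne_zero _).hasDerivAt
    simpa [mul_comm, Function.comp_def] using h2.comp t h1
  -- differentiation under integral: denominator D
  have hD := hasDerivAt_integral_of_dominated_loc_of_deriv_le (μ := μ)
    (F := fun t ω => S (x₁ + A ω * t)) (F' := fun t ω => A ω * deriv S (x₁ + A ω * t))
    (x₀ := (0:ℝ)) (s := ball (0:ℝ) 1) (bound := fun _ => C * B₂) (ball_mem_nhds 0 one_pos)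
    (Filter.Eventually.of_forall fun t => hmeasS t)
    (hintbdd _ (hmeasS 0) B₁ (fun ω => by
      simpa [Real.norm_eq_abs] using hB₁ _ (hmem ω 0 (by simp))))
    ((hA.aestronglyMeasurable.mul (hmeasS' 0)))
    (ae_of_all _ fun ω t ht => by
      rw [Real.norm_eq_abs, abs_mul]
      exact mul_le_mul (hAC ω) (by simpa [Real.norm_eq_abs] using hB₂ _ (hmem ω t ht))
        (abs_nonneg _) hC0)
    (integrable_const _)
    (ae_of_all _ fun ω t ht => hinner ω t)
  -- numerator N
  have hN := hasDerivAt_integral_of_dominated_loc_of_deriv_le (μ := μ)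
    (F := fun t ω => A ω * S (x₁ + A ω * t)) (F' := fun t ω => A ω ^ 2 * deriv S (x₁ + A ω * t))
    (x₀ := (0:ℝ)) (s := ball (0:ℝ) 1) (bound := fun _ => C ^ 2 * B₂) (ball_mem_nhds 0 one_pos)
    (Filter.Eventually.of_forall fun t => hA.aestronglyMeasurable.mul (hmeasS t))
    (hintbdd _ (hA.aestronglyMeasurable.mul (hmeasS 0)) (C * B₁) (fun ω => by
      rw [abs_mul]
      exact mul_le_mul (hAC ω) (by simpa [Real.norm_eq_abs] using hB₁ _ (hmem ω 0 (by simp)))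
        (abs_nonneg _) hC0))
    (((hA.pow_const 2).aestronglyMeasurable).mul (hmeasS' 0))
    (ae_of_all _ fun ω t ht => by
      rw [Real.norm_eq_abs, abs_mul, abs_pow]
      exact mul_le_mul (pow_le_pow_left₀ (abs_nonneg _) (hAC ω) 2)
        (by simpa [Real.norm_eq_abs] using hB₂ _ (hmem ω t ht))
        (abs_nonneg _) (by positivity))
    (integrable_const _)
    (ae_of_all _ fun ω t ht => by
      simpa [pow_two, mul_assoc] using ((hinner ω t).const_mul (A ω)))
  obtain ⟨hintD', hDder⟩ := hD
  obtain ⟨hintN', hNder⟩ := hN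
  -- values at 0
  set m : ℝ := ∫ ω, A ω ∂μ with hm
  have hval : ∀ (f : Ω → ℝ), (∫ ω, f ω * S (x₁ + A ω * 0) ∂μ) = (∫ ω, f ω ∂μ) * S x₁ := by
    intro f
    simp only [mul_zero, add_zero]
    rw [integral_mul_const]
  have hD0 : (∫ ω, S (x₁ + A ω * 0) ∂μ) = S x₁ := by
    simp [measure_univ]
  have hN0 : (∫ ω, A ω * S (x₁ + A ω * 0) ∂μ) = m * S x₁ := hval A
  have hD'0 : (∫ ω, A ω * deriv S (x₁ + A ω * 0) ∂μ) = m * deriv S x₁ := by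
    simp only [mul_zero, add_zero]
    rw [integral_mul_const]
  have hN'0 : (∫ ω, A ω ^ 2 * deriv S (x₁ + A ω * 0) ∂μ) = (∫ ω, A ω ^ 2 ∂μ) * deriv S x₁ := by
    simp only [mul_zero, add_zero]
    rw [integral_mul_const]
  -- M = N / D as functions
  have hMfun : M = fun t => (∫ ω, A ω * S (x₁ + A ω * t) ∂μ) / (∫ ω, S (x₁ + A ω * t) ∂μ) :=
    funext hM
  have hM0 : M 0 = m := by
    rw [hM 0, hN0, hD0]
    field_simp
  refine ⟨hM0, ?_⟩
  -- variance identity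
  have hvar : (∫ ω, (A ω - m) ^ 2 ∂μ) = (∫ ω, A ω ^ 2 ∂μ) - m ^ 2 := by
    have : (fun ω => (A ω - m) ^ 2) = fun ω => A ω ^ 2 - (2 * m) * A ω + m ^ 2 := by
      funext ω; ring
    rw [this]
    have h1 : Integrable (fun ω => A ω ^ 2 - 2 * m * A ω) μ := by
      exact hintA2.sub (hintA.const_mul (2*m))
    rw [integral_add h1 (integrable_const _),
      integral_sub hintA2 (hintA.const_mul (2*m)), integral_const_mul, integral_const]
    simp [measure_univ, ← hm]
    ring
  -- derivative of quotient
  have hquot := hNder.div hDder (by rw [hD0]; exact ne_of_gt hSx₁)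
  rw [hMfun]
  have : ((∫ ω, A ω ^ 2 * deriv S (x₁ + A ω * 0) ∂μ) * (∫ ω, S (x₁ + A ω * 0) ∂μ) -
      (∫ ω, A ω * S (x₁ + A ω * 0) ∂μ) * (∫ ω, A ω * deriv S (x₁ + A ω * 0) ∂μ)) /
      (∫ ω, S (x₁ + A ω * 0) ∂μ) ^ 2
      = (deriv S x₁ / S x₁) * ∫ ω, (A ω - m) ^ 2 ∂μ := by
    rw [hN0, hD0, hD'0, hN'0, hvar]
    field_simp
  rw [← this]
  exact hquot.hasDerivWithinAt
end

section
/- Let ν, α, λ be reals with ν > 0 and λ > 0, and define X₁(y,p) = (1/p)·(y + (α - ν·p)/λ) for y > 0 and p > 0. Then the Slutsky coefficient ∂X₁/∂p (y,p) + X₁(y,p) · ∂X₁/∂y (y,p) equals -ν/(λ·p); in particular it is strictly negative. -/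
/-- The Slutsky coefficient of the SSF interior demand
`X₁(y,p) = (1/p)(y + (α - νp)/λ)` equals `-ν/(λp)` and is strictly negative. -/
theorem ssf_slutsky_neg (ν α lam : ℝ) (hν : 0 < ν) (hlam : 0 < lam)
    (X : ℝ → ℝ → ℝ) (hX : ∀ y p : ℝ, X y p = (1 / p) * (y + (α - ν * p) / lam))
    (y p : ℝ) (hy : 0 < y) (hp : 0 < p) :
    deriv (fun q => X y q) p + X y p * deriv (fun z => X z p) y = -ν / (lam * p) ∧
    deriv (fun q => X y q) p + X y p * deriv (fun z => X z p) y < 0 := by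
  have hp0 : p ≠ 0 := ne_of_gt hp
  have hl0 : lam ≠ 0 := ne_of_gt hlam
  have h1 : deriv (fun q => X y q) p
      = -(1/p^2) * (y + (α - ν * p) / lam) + (1/p) * (-ν/lam) := by
    have hd : HasDerivAt (fun q : ℝ => (1 / q) * (y + (α - ν * q) / lam))
        (-(1/p^2) * (y + (α - ν * p) / lam) + (1/p) * (-ν/lam)) p := by
      have h1 : HasDerivAt (fun q : ℝ => 1 / q) (-(1/p^2)) p := by
        simpa [one_div, sq] using (hasDerivAt_inv hp0)
      have h2 : HasDerivAt (fun q : ℝ => y + (α - ν * q) / lam) (-ν/lam) p := by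
        have : HasDerivAt (fun q : ℝ => α - ν * q) (-ν) p := by
          simpa using ((hasDerivAt_id p).const_mul ν).const_sub α
        simpa [neg_div] using (this.div_const lam).const_add y
      exact h1.mul h2
    have : (fun q => X y q) = fun q : ℝ => (1 / q) * (y + (α - ν * q) / lam) := by
      funext q; exact hX y q
    rw [this, hd.deriv]
  have h2 : deriv (fun z => X z p) y = 1/p := by
    have hd : HasDerivAt (fun z : ℝ => (1 / p) * (z + (α - ν * p) / lam)) (1/p) y := by
      simpa using ((hasDerivAt_id y).add_const ((α - ν * p) / lam)).const_mul (1/p)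
    have : (fun z => X z p) = fun z : ℝ => (1 / p) * (z + (α - ν * p) / lam) := by
      funext z; exact hX z p
    rw [this, hd.deriv]
  have heq : deriv (fun q => X y q) p + X y p * deriv (fun z => X z p) y = -ν / (lam * p) := by
    rw [h1, h2, hX y p]; field_simp; ring
  refine ⟨heq, ?_⟩
  rw [heq]
  exact div_neg_of_neg_of_pos (neg_neg_of_pos hν) (by positivity)
end

section
/- Let f, g, h : ℝ → ℝ be functions with f continuous on [0,∞), f(0) = g(0) = h(0) = 0, and f(x₁ + x₂) + g(x₁) + h(x₂) = 0 for all x₁, x₂ ≥ 0. Then there exists a real number α such that f(x) = α·x, g(x) = -α·x, and h(x) = -α·x for all x ≥ 0. -/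
/-- Pexider-type identification step of Appendix E.1: if `f` is continuous on `[0,∞)`,
`f(0)=g(0)=h(0)=0`, and `f(x₁+x₂)+g(x₁)+h(x₂)=0` for all `x₁,x₂ ≥ 0`, then there is a
real `α` with `f(x)=αx`, `g(x)=-αx`, `h(x)=-αx` on `[0,∞)`. -/
theorem pexider_affine (f g h : ℝ → ℝ)
    (hf : ContinuousOn f (Set.Ici 0))
    (hf0 : f 0 = 0) (hg0 : g 0 = 0) (hh0 : h 0 = 0)
    (heq : ∀ x₁ x₂ : ℝ, 0 ≤ x₁ → 0 ≤ x₂ → f (x₁ + x₂) + g x₁ + h x₂ = 0) :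
    ∃ α : ℝ, (∀ x : ℝ, 0 ≤ x → f x = α * x) ∧
      (∀ x : ℝ, 0 ≤ x → g x = -(α * x)) ∧
      (∀ x : ℝ, 0 ≤ x → h x = -(α * x)) := by
  have hgf : ∀ x : ℝ, 0 ≤ x → g x = -f x := by
    intro x hx
    have := heq x 0 hx le_rfl
    rw [add_zero, hh0] at this; linarith
  have hhf : ∀ x : ℝ, 0 ≤ x → h x = -f x := by
    intro x hx
    have := heq 0 x le_rfl hx
    rw [zero_add, hg0] at this; linarith
  have hadd : ∀ a b : ℝ, 0 ≤ a → 0 ≤ b → f (a + b) = f a + f b := by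
    intro a b ha hb
    have := heq a b ha hb
    rw [hgf a ha, hhf b hb] at this; linarith
  have hnat : ∀ (n : ℕ) (x : ℝ), 0 ≤ x → f (n * x) = n * f x := by
    intro n
    induction n with
    | zero => intro x _; simp [hf0]
    | succ n ih =>
      intro x hx
      have e : ((n : ℝ) + 1) * x = (n : ℝ) * x + x := by ring
      push_cast
      rw [e, hadd _ _ (by positivity) hx, ih x hx]
      ring
  set α := f 1 with hα
  have hrat : ∀ q : ℚ, 0 ≤ q → f q = α * q := by
    intro q hq
    have hden : (0 : ℝ) < (q.den : ℝ) := by exact_mod_cast q.pos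
    have hqnum : ((q.num : ℝ)) = (q.den : ℝ) * (q : ℝ) := by
      have : (q.num : ℚ) = (q.den : ℚ) * q := by
        rw [mul_comm]
        exact_mod_cast (Rat.mul_den_eq_num q).symm
      exact_mod_cast congrArg (fun r : ℚ => (r : ℝ)) this
    have hqr : (0:ℝ) ≤ (q:ℝ) := by exact_mod_cast hq
    have h1 : f ((q.den : ℝ) * (q : ℝ)) = (q.den : ℝ) * f q := hnat q.den q hqr
    have hnumnn : 0 ≤ q.num := Rat.num_nonneg.2 hq
    have h2 : f ((q.num : ℝ)) = (q.num : ℝ) * α := by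
      have := hnat q.num.toNat 1 zero_le_one
      rw [mul_one] at this
      have hcast : ((q.num.toNat : ℝ)) = (q.num : ℝ) := by
        exact_mod_cast Int.toNat_of_nonneg hnumnn
      rw [hcast] at this
      rw [this, hα]
    rw [hqnum, h1] at h2
    have hne : ((q.den : ℝ)) ≠ 0 := ne_of_gt hden
    have := mul_left_cancel₀ hne
      (h2.trans (by ring : ((q.den:ℝ)) * (q:ℝ) * α = (q.den:ℝ) * (α * (q:ℝ))))
    exact this
  -- extend f to a continuous function on ℝ
  set F : ℝ → ℝ := fun x => f (max x 0) with hF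
  have hFc : Continuous F := by
    apply hf.comp_continuous (continuous_id.max continuous_const)
    intro x; exact Set.mem_Ici.2 (le_max_right x 0)
  have hS : Set.EqOn F (fun x => α * x) ((↑) '' {q : ℚ | 0 ≤ q}) := by
    rintro x ⟨q, hq, rfl⟩
    have hqr : (0:ℝ) ≤ (q:ℝ) := by exact_mod_cast hq
    simp only [hF]
    rw [max_eq_left hqr, hrat q hq]
  have hclos : Set.Ici (0:ℝ) ⊆ closure ((↑) '' {q : ℚ | 0 ≤ q}) := by
    have h1 : Set.Ioi (0:ℝ) ⊆ closure (Set.Ioi 0 ∩ Set.range ((↑) : ℚ → ℝ)) :=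
      Rat.denseRange_cast.open_subset_closure_inter isOpen_Ioi
    have h2 : Set.Ioi 0 ∩ Set.range ((↑) : ℚ → ℝ) ⊆ (↑) '' {q : ℚ | 0 ≤ q} := by
      rintro x ⟨hx, q, rfl⟩
      exact ⟨q, by show (0:ℚ) ≤ q; exact_mod_cast le_of_lt (Set.mem_Ioi.1 hx), rfl⟩
    calc Set.Ici (0:ℝ) = closure (Set.Ioi 0) := (closure_Ioi 0).symm
      _ ⊆ closure (closure (Set.Ioi 0 ∩ Set.range ((↑) : ℚ → ℝ))) := closure_mono h1
      _ = closure (Set.Ioi 0 ∩ Set.range ((↑) : ℚ → ℝ)) := closure_closure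
      _ ⊆ closure ((↑) '' {q : ℚ | 0 ≤ q}) := closure_mono h2
  have hmain : ∀ x : ℝ, 0 ≤ x → f x = α * x := by
    intro x hx
    have := (hS.closure hFc (continuous_const.mul continuous_id)) (hclos hx)
    simpa [hF, max_eq_left hx] using this
  exact ⟨α, hmain, fun x hx => by rw [hgf x hx, hmain x hx],
    fun x hx => by rw [hhf x hx, hmain x hx]⟩
end

section
/- Let A_c, A₁, A₂ and A_c*, A₁*, A₂* be real random variables, each strictly positive almost surely and each satisfying P(X < ε) > 0 for every ε > 0 (essential infimum equal to 0). Let Ψ denote the Laplace transform, e.g. Ψ_c(x) = E[exp(-A_c·x)]. If Ψ_c(x₁+x₂)·Ψ₁(x₁)·Ψ₂(x₂) = Ψ_c*(x₁+x₂)·Ψ₁*(x₁)·Ψ₂*(x₂) for all x₁, x₂ ≥ 0, then Ψ_c(t) = Ψ_c*(t), Ψ₁(t) = Ψ₁*(t), and Ψ₂(t) = Ψ₂*(t) for all t ≥ 0. -/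
open MeasureTheory

section SaraAux

variable {Ω : Type*} [MeasurableSpace Ω] {μ : Measure Ω} [IsProbabilityMeasure μ]

lemma sara_lap_integrable {A : Ω → ℝ} (hA : Measurable A) (hpos : ∀ᵐ ω ∂μ, 0 < A ω)
    {t : ℝ} (ht : 0 ≤ t) : Integrable (fun ω => Real.exp (-(A ω * t))) μ := by
  refine Integrable.mono' (integrable_const 1) ((hA.mul_const t).neg.exp).aestronglyMeasurable ?_
  filter_upwards [hpos] with ω hω
  rw [Real.norm_eq_abs, abs_of_pos (Real.exp_pos _)]
  exact Real.exp_le_one_iff.mpr (neg_nonpos.mpr (mul_nonneg hω.le ht))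

lemma sara_lap_le_one {A : Ω → ℝ} (hA : Measurable A) (hpos : ∀ᵐ ω ∂μ, 0 < A ω)
    {t : ℝ} (ht : 0 ≤ t) : (∫ ω, Real.exp (-(A ω * t)) ∂μ) ≤ 1 := by
  calc (∫ ω, Real.exp (-(A ω * t)) ∂μ) ≤ ∫ _, (1:ℝ) ∂μ := by
        refine integral_mono_ae (sara_lap_integrable hA hpos ht) (integrable_const 1) ?_
        filter_upwards [hpos] with ω hω
        exact Real.exp_le_one_iff.mpr (neg_nonpos.mpr (mul_nonneg hω.le ht))
    _ = 1 := by simp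

lemma sara_lap_lb {A : Ω → ℝ} (hA : Measurable A) (hpos : ∀ᵐ ω ∂μ, 0 < A ω)
    {t ε : ℝ} (ht : 0 ≤ t) :
    Real.exp (-(ε * t)) * (μ {ω | A ω < ε}).toReal ≤ ∫ ω, Real.exp (-(A ω * t)) ∂μ := by
  have hs : MeasurableSet {ω | A ω < ε} := measurableSet_lt hA measurable_const
  have h1 : ∫ ω, Set.indicator {ω | A ω < ε} (fun _ => Real.exp (-(ε*t))) ω ∂μ
      = Real.exp (-(ε*t)) * (μ {ω | A ω < ε}).toReal := by
    rw [integral_indicator_const _ hs, smul_eq_mul, mul_comm]; rfl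
  rw [← h1]
  refine integral_mono ((integrable_const _).indicator hs) (sara_lap_integrable hA hpos ht) ?_
  intro ω
  by_cases hω : ω ∈ {ω | A ω < ε}
  · rw [Set.indicator_of_mem hω]
    exact Real.exp_le_exp.mpr (neg_le_neg (mul_le_mul_of_nonneg_right (le_of_lt hω) ht))
  · rw [Set.indicator_of_notMem hω]
    exact (Real.exp_pos _).le

lemma sara_lap_pos {A : Ω → ℝ} (hA : Measurable A) (hpos : ∀ᵐ ω ∂μ, 0 < A ω)
    (hinf : 0 < μ {ω | A ω < 1}) {t : ℝ} (ht : 0 ≤ t) :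
    0 < ∫ ω, Real.exp (-(A ω * t)) ∂μ := by
  refine lt_of_lt_of_le ?_ (sara_lap_lb hA hpos ht (ε := 1))
  exact mul_pos (Real.exp_pos _) (ENNReal.toReal_pos hinf.ne' (measure_ne_top μ _))

lemma sara_lap_zero {A : Ω → ℝ} : (∫ ω, Real.exp (-(A ω * 0)) ∂μ) = 1 := by
  simp

lemma sara_key_le {F G : ℝ → ℝ}
    (hF1 : ∀ t, 0 ≤ t → F t ≤ 1)
    (hFpos : ∀ t, 0 ≤ t → 0 < F t)
    (hGpos : ∀ t, 0 ≤ t → 0 < G t)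
    (hGlb : ∀ ε : ℝ, 0 < ε → ∃ c : ℝ, 0 < c ∧ ∀ t, 0 ≤ t → c * Real.exp (-(ε*t)) ≤ G t)
    (hmul : ∀ x y, 0 ≤ x → 0 ≤ y → F (x+y) * G x * G y = G (x+y) * F x * F y) :
    ∀ t, 0 ≤ t → F t ≤ G t := by
  set h : ℝ → ℝ := fun t => F t / G t with hh
  have hpos : ∀ t, 0 ≤ t → 0 < h t := fun t ht => div_pos (hFpos t ht) (hGpos t ht)
  have hadd : ∀ x y, 0 ≤ x → 0 ≤ y → h (x+y) = h x * h y := by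
    intro x y hx hy
    have h1 := hmul x y hx hy
    have g1 := (hGpos x hx).ne'
    have g2 := (hGpos y hy).ne'
    have g3 := (hGpos (x+y) (by linarith)).ne'
    simp only [hh]
    rw [div_mul_div_comm, div_eq_div_iff g3 (mul_ne_zero g1 g2)]
    linarith [h1]
  have hzero : h 0 = 1 := by
    have := hadd 0 0 le_rfl le_rfl
    have h0 := hpos 0 le_rfl
    simp only [add_zero] at this
    nlinarith
  have hpow : ∀ (t : ℝ), 0 ≤ t → ∀ n : ℕ, h ((n : ℝ) * t) = (h t) ^ n := by
    intro t ht n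
    induction n with
    | zero => simpa using hzero
    | succ n ih =>
        have : ((n+1 : ℕ) : ℝ) * t = (n : ℝ) * t + t := by push_cast; ring
        rw [this, hadd _ t (by positivity) ht, ih, pow_succ]
  have hle_exp : ∀ t, 0 ≤ t → ∀ ε : ℝ, 0 < ε → h t ≤ Real.exp (ε * t) := by
    intro t ht ε hε
    obtain ⟨c, hc, hcle⟩ := hGlb ε hε
    by_contra hgt
    push_neg at hgt
    have hr : 1 < h t * Real.exp (-(ε*t)) := by
      rw [Real.exp_neg, ← div_eq_mul_inv]
      exact (one_lt_div (Real.exp_pos _)).mpr hgt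
    obtain ⟨n, hn⟩ := pow_unbounded_of_one_lt (1/c) hr
    have hnt : (0:ℝ) ≤ (n:ℝ) * t := by positivity
    have hb : h ((n:ℝ)*t) ≤ Real.exp (ε * ((n:ℝ)*t)) / c := by
      have h2 : c * Real.exp (-(ε*((n:ℝ)*t))) ≤ G ((n:ℝ)*t) := hcle _ hnt
      have h3 : F ((n:ℝ)*t) ≤ 1 := hF1 _ hnt
      have h4 : 0 < G ((n:ℝ)*t) := hGpos _ hnt
      rw [hh]
      rw [div_le_div_iff₀ h4 hc]
      have h5 : Real.exp (-(ε*((n:ℝ)*t))) * Real.exp (ε*((n:ℝ)*t)) = 1 := by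
        rw [← Real.exp_add]; simp
      nlinarith [Real.exp_pos (ε*((n:ℝ)*t)), Real.exp_pos (-(ε*((n:ℝ)*t)))]
    rw [hpow t ht n] at hb
    have hcontra : (h t * Real.exp (-(ε*t))) ^ n ≤ 1/c := by
      rw [mul_pow, ← Real.exp_nat_mul]
      have : (n:ℝ) * -(ε*t) = -(ε * ((n:ℝ)*t)) := by ring
      rw [this, Real.exp_neg]
      calc h t ^ n * (Real.exp (ε * ((n:ℝ)*t)))⁻¹
          ≤ (Real.exp (ε * ((n:ℝ)*t)) / c) * (Real.exp (ε * ((n:ℝ)*t)))⁻¹ := by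
            apply mul_le_mul_of_nonneg_right hb (by positivity)
        _ = 1/c := by field_simp
    linarith
  intro t ht
  have hle1 : h t ≤ 1 := by
    rcases eq_or_lt_of_le ht with h0 | h0
    · rw [← h0]; exact le_of_eq hzero
    by_contra hgt
    push_neg at hgt
    have hl : 0 < Real.log (h t) := Real.log_pos hgt
    have hε : 0 < Real.log (h t) / (2*t) := by positivity
    have hle := hle_exp t ht _ hε
    have heq2 : Real.log (h t) / (2*t) * t = Real.log (h t) / 2 := by
      field_simp
    rw [heq2] at hle
    have hlt : Real.exp (Real.log (h t) / 2) < Real.exp (Real.log (h t)) :=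
      Real.exp_lt_exp.mpr (by linarith)
    rw [Real.exp_log (by linarith : 0 < h t)] at hlt
    linarith
  exact (div_le_one (hGpos t ht)).mp hle1

end SaraAux

/-- Appendix E.1: if `A_c, A₁, A₂` and `A_c*, A₁*, A₂*` are a.s. strictly positive random
variables with essential infimum 0, and the products of Laplace transforms
`Ψ_c(x₁+x₂)Ψ₁(x₁)Ψ₂(x₂)` agree for all `x₁,x₂ ≥ 0`, then the three Laplace transforms
agree on `[0,∞)`. -/
theorem sara_common_identification_from_utility {Ω : Type*} [MeasurableSpace Ω]
    (μ : Measure Ω) [IsProbabilityMeasure μ]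
    (Ac A₁ A₂ Acs A₁s A₂s : Ω → ℝ)
    (hAc : Measurable Ac) (hA₁ : Measurable A₁) (hA₂ : Measurable A₂)
    (hAcs : Measurable Acs) (hA₁s : Measurable A₁s) (hA₂s : Measurable A₂s)
    (hposc : ∀ᵐ ω ∂μ, 0 < Ac ω) (hpos₁ : ∀ᵐ ω ∂μ, 0 < A₁ ω) (hpos₂ : ∀ᵐ ω ∂μ, 0 < A₂ ω)
    (hposcs : ∀ᵐ ω ∂μ, 0 < Acs ω) (hpos₁s : ∀ᵐ ω ∂μ, 0 < A₁s ω)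
    (hpos₂s : ∀ᵐ ω ∂μ, 0 < A₂s ω)
    (hinfc : ∀ ε : ℝ, 0 < ε → 0 < μ {ω | Ac ω < ε})
    (hinf₁ : ∀ ε : ℝ, 0 < ε → 0 < μ {ω | A₁ ω < ε})
    (hinf₂ : ∀ ε : ℝ, 0 < ε → 0 < μ {ω | A₂ ω < ε})
    (hinfcs : ∀ ε : ℝ, 0 < ε → 0 < μ {ω | Acs ω < ε})
    (hinf₁s : ∀ ε : ℝ, 0 < ε → 0 < μ {ω | A₁s ω < ε})
    (hinf₂s : ∀ ε : ℝ, 0 < ε → 0 < μ {ω | A₂s ω < ε})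
    (heq : ∀ x₁ x₂ : ℝ, 0 ≤ x₁ → 0 ≤ x₂ →
      (∫ ω, Real.exp (-(Ac ω * (x₁ + x₂))) ∂μ) * (∫ ω, Real.exp (-(A₁ ω * x₁)) ∂μ)
          * (∫ ω, Real.exp (-(A₂ ω * x₂)) ∂μ)
        = (∫ ω, Real.exp (-(Acs ω * (x₁ + x₂))) ∂μ)
          * (∫ ω, Real.exp (-(A₁s ω * x₁)) ∂μ) * (∫ ω, Real.exp (-(A₂s ω * x₂)) ∂μ)) :
    ∀ t : ℝ, 0 ≤ t →
      (∫ ω, Real.exp (-(Ac ω * t)) ∂μ) = (∫ ω, Real.exp (-(Acs ω * t)) ∂μ) ∧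
      (∫ ω, Real.exp (-(A₁ ω * t)) ∂μ) = (∫ ω, Real.exp (-(A₁s ω * t)) ∂μ) ∧
      (∫ ω, Real.exp (-(A₂ ω * t)) ∂μ) = (∫ ω, Real.exp (-(A₂s ω * t)) ∂μ) := by
  classical
  -- abbreviations
  set Fc : ℝ → ℝ := fun s => ∫ ω, Real.exp (-(Ac ω * s)) ∂μ with hFc
  set F₁ : ℝ → ℝ := fun s => ∫ ω, Real.exp (-(A₁ ω * s)) ∂μ with hF₁
  set F₂ : ℝ → ℝ := fun s => ∫ ω, Real.exp (-(A₂ ω * s)) ∂μ with hF₂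
  set Gc : ℝ → ℝ := fun s => ∫ ω, Real.exp (-(Acs ω * s)) ∂μ with hGc
  set G₁ : ℝ → ℝ := fun s => ∫ ω, Real.exp (-(A₁s ω * s)) ∂μ with hG₁
  set G₂ : ℝ → ℝ := fun s => ∫ ω, Real.exp (-(A₂s ω * s)) ∂μ with hG₂
  -- positivity
  have hFcpos : ∀ s, 0 ≤ s → 0 < Fc s := fun s hs =>
    sara_lap_pos hAc hposc (hinfc 1 one_pos) hs
  have hF₁pos : ∀ s, 0 ≤ s → 0 < F₁ s := fun s hs =>
    sara_lap_pos hA₁ hpos₁ (hinf₁ 1 one_pos) hs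
  have hF₂pos : ∀ s, 0 ≤ s → 0 < F₂ s := fun s hs =>
    sara_lap_pos hA₂ hpos₂ (hinf₂ 1 one_pos) hs
  have hGcpos : ∀ s, 0 ≤ s → 0 < Gc s := fun s hs =>
    sara_lap_pos hAcs hposcs (hinfcs 1 one_pos) hs
  have hG₁pos : ∀ s, 0 ≤ s → 0 < G₁ s := fun s hs =>
    sara_lap_pos hA₁s hpos₁s (hinf₁s 1 one_pos) hs
  have hG₂pos : ∀ s, 0 ≤ s → 0 < G₂ s := fun s hs =>
    sara_lap_pos hA₂s hpos₂s (hinf₂s 1 one_pos) hs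
  -- upper bounds
  have hFcle : ∀ s, 0 ≤ s → Fc s ≤ 1 := fun s hs => sara_lap_le_one hAc hposc hs
  have hGcle : ∀ s, 0 ≤ s → Gc s ≤ 1 := fun s hs => sara_lap_le_one hAcs hposcs hs
  -- lower bounds
  have hFclb : ∀ ε : ℝ, 0 < ε → ∃ c : ℝ, 0 < c ∧ ∀ s, 0 ≤ s →
      c * Real.exp (-(ε*s)) ≤ Fc s := by
    intro ε hε
    refine ⟨(μ {ω | Ac ω < ε}).toReal,
      ENNReal.toReal_pos (hinfc ε hε).ne' (measure_ne_top μ _), fun s hs => ?_⟩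
    rw [mul_comm]
    exact sara_lap_lb hAc hposc hs
  have hGclb : ∀ ε : ℝ, 0 < ε → ∃ c : ℝ, 0 < c ∧ ∀ s, 0 ≤ s →
      c * Real.exp (-(ε*s)) ≤ Gc s := by
    intro ε hε
    refine ⟨(μ {ω | Acs ω < ε}).toReal,
      ENNReal.toReal_pos (hinfcs ε hε).ne' (measure_ne_top μ _), fun s hs => ?_⟩
    rw [mul_comm]
    exact sara_lap_lb hAcs hposcs hs
  -- values at 0
  have hF₁0 : F₁ 0 = 1 := sara_lap_zero
  have hF₂0 : F₂ 0 = 1 := sara_lap_zero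
  have hG₁0 : G₁ 0 = 1 := sara_lap_zero
  have hG₂0 : G₂ 0 = 1 := sara_lap_zero
  -- functional equations
  have E0 : ∀ x y : ℝ, 0 ≤ x → 0 ≤ y →
      Fc (x+y) * F₁ x * F₂ y = Gc (x+y) * G₁ x * G₂ y := fun x y hx hy => heq x y hx hy
  have E1 : ∀ x, 0 ≤ x → Fc x * F₁ x = Gc x * G₁ x := by
    intro x hx
    have h0 := E0 x 0 hx le_rfl
    rw [add_zero, hF₂0, hG₂0, mul_one, mul_one] at h0
    exact h0
  have E2 : ∀ y, 0 ≤ y → Fc y * F₂ y = Gc y * G₂ y := by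
    intro y hy
    have h0 := E0 0 y le_rfl hy
    rw [zero_add, hF₁0, hG₁0] at h0
    calc Fc y * F₂ y = Fc y * 1 * F₂ y := by ring
      _ = Gc y * 1 * G₂ y := h0
      _ = Gc y * G₂ y := by ring
  have hmul : ∀ x y, 0 ≤ x → 0 ≤ y →
      Fc (x+y) * Gc x * Gc y = Gc (x+y) * Fc x * Fc y := by
    intro x y hx hy
    have h3 := E0 x y hx hy
    have e1 := E1 x hx
    have e2 := E2 y hy
    have hne : F₁ x * F₂ y ≠ 0 := (mul_pos (hF₁pos x hx) (hF₂pos y hy)).ne'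
    apply mul_right_cancel₀ hne
    calc Fc (x+y) * Gc x * Gc y * (F₁ x * F₂ y)
        = (Fc (x+y) * F₁ x * F₂ y) * (Gc x * Gc y) := by ring
      _ = (Gc (x+y) * G₁ x * G₂ y) * (Gc x * Gc y) := by rw [h3]
      _ = Gc (x+y) * ((Gc x * G₁ x) * (Gc y * G₂ y)) := by ring
      _ = Gc (x+y) * ((Fc x * F₁ x) * (Fc y * F₂ y)) := by rw [← e1, ← e2]
      _ = Gc (x+y) * Fc x * Fc y * (F₁ x * F₂ y) := by ring
  have hmul' : ∀ x y, 0 ≤ x → 0 ≤ y →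
      Gc (x+y) * Fc x * Fc y = Fc (x+y) * Gc x * Gc y :=
    fun x y hx hy => (hmul x y hx hy).symm
  have hle : ∀ s, 0 ≤ s → Fc s ≤ Gc s :=
    sara_key_le hFcle hFcpos hGcpos hGclb hmul
  have hge : ∀ s, 0 ≤ s → Gc s ≤ Fc s :=
    sara_key_le hGcle hGcpos hFcpos hFclb hmul'
  have hceq : ∀ s, 0 ≤ s → Fc s = Gc s := fun s hs =>
    le_antisymm (hle s hs) (hge s hs)
  intro t ht
  refine ⟨hceq t ht, ?_, ?_⟩
  · have e1 := E1 t ht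
    rw [hceq t ht] at e1
    exact mul_left_cancel₀ (hGcpos t ht).ne' e1
  · have e2 := E2 t ht
    rw [hceq t ht] at e2
    exact mul_left_cancel₀ (hGcpos t ht).ne' e2
end

section
/- Let A be a real random variable with P(A > 0) = 1 and P(A < ε) > 0 for every ε > 0. Then the ratio E[A·exp(-A·x)] / E[exp(-A·x)] tends to 0 as x tends to +∞. -/
open MeasureTheory Filter

lemma mul_exp_neg_le_one' {t : ℝ} (ht : 0 ≤ t) : t * Real.exp (-t) ≤ 1 := by
  have h1 : t ≤ Real.exp t := by linarith [Real.add_one_le_exp t]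
  calc t * Real.exp (-t) ≤ Real.exp t * Real.exp (-t) :=
        mul_le_mul_of_nonneg_right h1 (Real.exp_pos _).le
    _ = 1 := by rw [← Real.exp_add, add_neg_cancel, Real.exp_zero]

/-- If `A` is a.s. strictly positive with essential infimum 0, then the tilted mean
`E[A·exp(-Ax)]/E[exp(-Ax)]` tends to `0` as `x → ∞`. -/
theorem tilted_mean_tendsto_zero {Ω : Type*} [MeasurableSpace Ω]
    (μ : Measure Ω) [IsProbabilityMeasure μ]
    (A : Ω → ℝ) (hA : Measurable A)
    (hpos : ∀ᵐ ω ∂μ, 0 < A ω)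
    (hinf : ∀ ε : ℝ, 0 < ε → 0 < μ {ω | A ω < ε}) :
    Tendsto (fun x : ℝ =>
        (∫ ω, A ω * Real.exp (-(A ω * x)) ∂μ) / (∫ ω, Real.exp (-(A ω * x)) ∂μ))
      atTop (nhds 0) := by
  -- integrability of the exponential
  have hintE : ∀ x : ℝ, 0 ≤ x → Integrable (fun ω => Real.exp (-(A ω * x))) μ := by
    intro x hx
    refine (integrable_const (1 : ℝ)).mono' ((hA.mul_const x).neg.exp).aestronglyMeasurable ?_
    filter_upwards [hpos] with ω hω
    rw [Real.norm_eq_abs, abs_of_pos (Real.exp_pos _)]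
    have : (0:ℝ) ≤ A ω * x := mul_nonneg hω.le hx
    calc Real.exp (-(A ω * x)) ≤ Real.exp 0 := Real.exp_le_exp.2 (by linarith)
      _ = 1 := Real.exp_zero
  -- integrability of A times the exponential
  have hintA : ∀ x : ℝ, 0 < x → Integrable (fun ω => A ω * Real.exp (-(A ω * x))) μ := by
    intro x hx
    refine (integrable_const (1/x : ℝ)).mono'
      (hA.mul ((hA.mul_const x).neg.exp)).aestronglyMeasurable ?_
    filter_upwards [hpos] with ω hω
    have h0 : (0:ℝ) ≤ A ω * x := mul_nonneg hω.le hx.le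
    have h1 : (A ω * x) * Real.exp (-(A ω * x)) ≤ 1 := mul_exp_neg_le_one' h0
    rw [Real.norm_eq_abs, abs_of_nonneg (mul_nonneg hω.le (Real.exp_pos _).le)]
    rw [le_div_iff₀ hx]
    nlinarith [Real.exp_pos (-(A ω * x))]
  -- lower bound for the denominator
  have hDlb : ∀ δ : ℝ, 0 < δ → ∀ x : ℝ, 0 ≤ x →
      Real.exp (-(δ * x)) * (μ {ω | A ω < δ}).toReal ≤ ∫ ω, Real.exp (-(A ω * x)) ∂μ := by
    intro δ hδ x hx
    have hs : MeasurableSet {ω | A ω < δ} := hA measurableSet_Iio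
    have h1 : ∫ ω in {ω | A ω < δ}, Real.exp (-(δ * x)) ∂μ
        ≤ ∫ ω in {ω | A ω < δ}, Real.exp (-(A ω * x)) ∂μ := by
      refine setIntegral_mono_on (integrableOn_const (measure_ne_top μ _))
        ((hintE x hx).integrableOn) hs ?_
      intro ω hω
      exact Real.exp_le_exp.2 (by
        have : A ω * x ≤ δ * x := mul_le_mul_of_nonneg_right (le_of_lt hω) hx
        linarith)
    have h2 : ∫ ω in {ω | A ω < δ}, Real.exp (-(A ω * x)) ∂μ
        ≤ ∫ ω, Real.exp (-(A ω * x)) ∂μ := by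
      refine setIntegral_le_integral (hintE x hx) ?_
      filter_upwards with ω using (Real.exp_pos _).le
    have h3 : ∫ ω in {ω | A ω < δ}, Real.exp (-(δ * x)) ∂μ
        = (μ {ω | A ω < δ}).toReal * Real.exp (-(δ * x)) := by
      rw [setIntegral_const]; rfl
    rw [mul_comm]
    linarith [h1.trans h2, h3 ▸ (h1.trans h2)]
  -- main argument
  rw [Metric.tendsto_nhds]
  intro ε hε
  set c : ℝ := (μ {ω | A ω < ε/4}).toReal with hc_def
  have hc : 0 < c := ENNReal.toReal_pos (hinf (ε/4) (by linarith)).ne' (measure_ne_top μ _)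
  have h4pos : (0:ℝ) < 4 / (c * ε) := by positivity
  filter_upwards [eventually_gt_atTop (4 / (c * ε)), eventually_gt_atTop (0:ℝ)]
    with x hx4 hx0
  set D : ℝ := ∫ ω, Real.exp (-(A ω * x)) ∂μ with hD_def
  set N : ℝ := ∫ ω, A ω * Real.exp (-(A ω * x)) ∂μ with hN_def
  have hE := hintE x hx0.le
  have hAE := hintA x hx0
  have hDlow : Real.exp (-(ε/4 * x)) * c ≤ D := hDlb (ε/4) (by linarith) x hx0.le
  have hDpos : 0 < D := lt_of_lt_of_le (by positivity) hDlow
  have hNnn : 0 ≤ N := by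
    refine integral_nonneg_of_ae ?_
    filter_upwards [hpos] with ω hω
    exact mul_nonneg hω.le (Real.exp_pos _).le
  rw [Real.dist_eq, sub_zero, abs_of_nonneg (div_nonneg hNnn hDpos.le)]
  rw [div_lt_iff₀ hDpos]
  -- split the numerator at level ε/2
  have hs : MeasurableSet {ω | A ω < ε/2} := hA measurableSet_Iio
  have hsplit : N = (∫ ω in {ω | A ω < ε/2}, A ω * Real.exp (-(A ω * x)) ∂μ)
      + ∫ ω in {ω | A ω < ε/2}ᶜ, A ω * Real.exp (-(A ω * x)) ∂μ :=
    (integral_add_compl hs hAE).symm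
  -- bound on the small-A part
  have hI1 : (∫ ω in {ω | A ω < ε/2}, A ω * Real.exp (-(A ω * x)) ∂μ) ≤ (ε/2) * D := by
    have h1 : (∫ ω in {ω | A ω < ε/2}, A ω * Real.exp (-(A ω * x)) ∂μ)
        ≤ ∫ ω in {ω | A ω < ε/2}, (ε/2) * Real.exp (-(A ω * x)) ∂μ := by
      refine setIntegral_mono_on (hAE.integrableOn) ((hE.const_mul (ε/2)).integrableOn) hs ?_
      intro ω hω
      exact mul_le_mul_of_nonneg_right (le_of_lt hω) (Real.exp_pos _).le
    have h2 : (∫ ω in {ω | A ω < ε/2}, (ε/2) * Real.exp (-(A ω * x)) ∂μ)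
        = (ε/2) * ∫ ω in {ω | A ω < ε/2}, Real.exp (-(A ω * x)) ∂μ :=
      integral_const_mul _ _
    have h3 : (∫ ω in {ω | A ω < ε/2}, Real.exp (-(A ω * x)) ∂μ) ≤ D := by
      refine setIntegral_le_integral hE ?_
      filter_upwards with ω using (Real.exp_pos _).le
    calc (∫ ω in {ω | A ω < ε/2}, A ω * Real.exp (-(A ω * x)) ∂μ)
        ≤ (ε/2) * ∫ ω in {ω | A ω < ε/2}, Real.exp (-(A ω * x)) ∂μ := h2 ▸ h1
      _ ≤ (ε/2) * D := mul_le_mul_of_nonneg_left h3 (by linarith)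
  -- pointwise bound on the large-A part
  have key : ∀ a : ℝ, ε/2 ≤ a → a * Real.exp (-(a * x)) ≤ (2/x) * Real.exp (-(ε/4 * x)) := by
    intro a ha
    have hann : (0:ℝ) ≤ a := le_trans (by linarith) ha
    have h1 : (a * (x/2)) * Real.exp (-(a * (x/2))) ≤ 1 :=
      mul_exp_neg_le_one' (by positivity)
    have h2 : a * Real.exp (-(a * (x/2))) ≤ 2/x := by
      rw [le_div_iff₀ hx0]
      nlinarith [Real.exp_pos (-(a * (x/2)))]
    have h3 : Real.exp (-(a * (x/2))) ≤ Real.exp (-(ε/4 * x)) :=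
      Real.exp_le_exp.2 (by nlinarith)
    calc a * Real.exp (-(a * x))
        = (a * Real.exp (-(a * (x/2)))) * Real.exp (-(a * (x/2))) := by
          rw [mul_assoc, ← Real.exp_add]; ring_nf
      _ ≤ (2/x) * Real.exp (-(ε/4 * x)) :=
          mul_le_mul h2 h3 (Real.exp_pos _).le (by positivity)
  -- bound on the large-A part
  have hI2 : (∫ ω in {ω | A ω < ε/2}ᶜ, A ω * Real.exp (-(A ω * x)) ∂μ)
      ≤ (2/x) * Real.exp (-(ε/4 * x)) := by
    have h1 : (∫ ω in {ω | A ω < ε/2}ᶜ, A ω * Real.exp (-(A ω * x)) ∂μ)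
        ≤ ∫ _ω in {ω | A ω < ε/2}ᶜ, (2/x) * Real.exp (-(ε/4 * x)) ∂μ := by
      refine setIntegral_mono_on (hAE.integrableOn)
        (integrableOn_const (measure_ne_top μ _)) hs.compl ?_
      intro ω hω
      exact key (A ω) (le_of_not_gt hω)
    have h2 : (∫ _ω in {ω | A ω < ε/2}ᶜ, (2/x) * Real.exp (-(ε/4 * x)) ∂μ)
        = (μ ({ω | A ω < ε/2}ᶜ)).toReal * ((2/x) * Real.exp (-(ε/4 * x))) := by
      rw [setIntegral_const]; rfl
    have h3 : (μ ({ω | A ω < ε/2}ᶜ)).toReal ≤ 1 := by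
      calc (μ ({ω | A ω < ε/2}ᶜ)).toReal ≤ (μ Set.univ).toReal :=
            ENNReal.toReal_mono (measure_ne_top μ _) (measure_mono (Set.subset_univ _))
        _ = 1 := by simp
    calc (∫ ω in {ω | A ω < ε/2}ᶜ, A ω * Real.exp (-(A ω * x)) ∂μ)
        ≤ (μ ({ω | A ω < ε/2}ᶜ)).toReal * ((2/x) * Real.exp (-(ε/4 * x))) := h2 ▸ h1
      _ ≤ 1 * ((2/x) * Real.exp (-(ε/4 * x))) :=
          mul_le_mul_of_nonneg_right h3 (by positivity)
      _ = (2/x) * Real.exp (-(ε/4 * x)) := one_mul _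
  -- combine
  have hxc : 2/(x*c) < ε/2 := by
    rw [div_lt_iff₀ (by positivity)]
    have h4 : 4 < x * (c * ε) := (div_lt_iff₀ (by positivity)).mp hx4
    nlinarith
  have htail : (2/x) * Real.exp (-(ε/4 * x)) ≤ (2/(x*c)) * D := by
    have : (2/x) * Real.exp (-(ε/4 * x)) = (2/(x*c)) * (Real.exp (-(ε/4 * x)) * c) := by
      field_simp
    rw [this]
    exact mul_le_mul_of_nonneg_left hDlow (by positivity)
  calc N ≤ (ε/2) * D + (2/(x*c)) * D := by
        rw [hsplit]; exact add_le_add hI1 (hI2.trans htail)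
    _ = (ε/2 + 2/(x*c)) * D := by ring
    _ < ε * D := by
        apply mul_lt_mul_of_pos_right _ hDpos
        linarith
end

section
/- Let Ψ_c, Ψ_c*, Ψ₂, Ψ₂* : [0,∞) → (0,∞) be differentiable functions with Ψ_c(0) = Ψ_c*(0) = 1, whose logarithmic derivatives (log Ψ_c)', (log Ψ_c*)', (log Ψ₂)', (log Ψ₂*)' are strictly negative everywhere on [0,∞). Suppose that for all x₁, x₂ ≥ 0, (log Ψ_c)'(x₁+x₂) · (log Ψ₂*)'(x₂) = (log Ψ_c*)'(x₁+x₂) · (log Ψ₂)'(x₂). Then there exists ν > 0 such that Ψ_c(t) = Ψ_c*(t)^ν for all t ≥ 0. -/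
/-- Recursive-case Proposition (Appendix E.3): if the logarithmic derivatives satisfy the
cross equation `(log Ψ_c)'(x₁+x₂)·(log Ψ₂*)'(x₂) = (log Ψ_c*)'(x₁+x₂)·(log Ψ₂)'(x₂)`
everywhere on the nonnegative orthant, then `Ψ_c = (Ψ_c*)^ν` on `[0,∞)` for some `ν > 0`. -/
theorem sara_recursive_identification (Ψc Ψcs Ψ₂ Ψ₂s : ℝ → ℝ)
    (hc : Differentiable ℝ Ψc) (hcs : Differentiable ℝ Ψcs)
    (h₂ : Differentiable ℝ Ψ₂) (h₂s : Differentiable ℝ Ψ₂s)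
    (hposc : ∀ t : ℝ, 0 < Ψc t) (hposcs : ∀ t : ℝ, 0 < Ψcs t)
    (hpos₂ : ∀ t : ℝ, 0 < Ψ₂ t) (hpos₂s : ∀ t : ℝ, 0 < Ψ₂s t)
    (h0c : Ψc 0 = 1) (h0cs : Ψcs 0 = 1)
    (hnegc : ∀ t : ℝ, 0 ≤ t → deriv (fun s => Real.log (Ψc s)) t < 0)
    (hnegcs : ∀ t : ℝ, 0 ≤ t → deriv (fun s => Real.log (Ψcs s)) t < 0)
    (hneg₂ : ∀ t : ℝ, 0 ≤ t → deriv (fun s => Real.log (Ψ₂ s)) t < 0)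
    (hneg₂s : ∀ t : ℝ, 0 ≤ t → deriv (fun s => Real.log (Ψ₂s s)) t < 0)
    (heq : ∀ x₁ x₂ : ℝ, 0 ≤ x₁ → 0 ≤ x₂ →
      deriv (fun s => Real.log (Ψc s)) (x₁ + x₂) * deriv (fun s => Real.log (Ψ₂s s)) x₂ =
      deriv (fun s => Real.log (Ψcs s)) (x₁ + x₂) * deriv (fun s => Real.log (Ψ₂ s)) x₂) :
    ∃ ν : ℝ, 0 < ν ∧ ∀ t : ℝ, 0 ≤ t → Ψc t = Ψcs t ^ ν := by
  set f := deriv (fun s => Real.log (Ψc s)) with hf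
  set g := deriv (fun s => Real.log (Ψcs s)) with hg
  set A := deriv (fun s => Real.log (Ψ₂s s)) 0 with hA
  set B := deriv (fun s => Real.log (Ψ₂ s)) 0 with hB
  have hAneg : A < 0 := hneg₂s 0 le_rfl
  have hBneg : B < 0 := hneg₂ 0 le_rfl
  refine ⟨B / A, div_pos_iff.2 (Or.inr ⟨hBneg, hAneg⟩), ?_⟩
  have hfg : ∀ t : ℝ, 0 ≤ t → f t = (B / A) * g t := by
    intro t ht
    have := heq t 0 ht le_rfl
    simp only [add_zero, ← hA, ← hB] at this
    rw [div_mul_eq_mul_div, eq_div_iff hAneg.ne]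
    linear_combination this
  -- consider h = log Ψc - (B/A) log Ψcs
  set ν := B / A with hν
  set F : ℝ → ℝ := fun t => Real.log (Ψc t) - ν * Real.log (Ψcs t) with hF
  have hFdiff : Differentiable ℝ F := by
    apply Differentiable.sub
    · exact fun t => ((hc t).log (hposc t).ne')
    · exact Differentiable.const_mul (fun t => ((hcs t).log (hposcs t).ne')) ν
  have hFderiv : ∀ t : ℝ, 0 ≤ t → deriv F t = 0 := by
    intro t ht
    have h1 : HasDerivAt (fun s => Real.log (Ψc s)) (f t) t :=
      ((hc t).log (hposc t).ne').hasDerivAt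
    have h2 : HasDerivAt (fun s => Real.log (Ψcs s)) (g t) t :=
      ((hcs t).log (hposcs t).ne').hasDerivAt
    have : HasDerivAt F (f t - ν * g t) t := h1.sub (h2.const_mul ν)
    rw [this.deriv, hfg t ht]
    ring
  have hFconst : ∀ t : ℝ, 0 ≤ t → F t = F 0 := by
    intro t ht
    have hcont : ContinuousOn F (Set.Icc 0 t) := hFdiff.continuous.continuousOn
    have hder : ∀ x ∈ Set.Ico (0:ℝ) t, HasDerivWithinAt F 0 (Set.Ici x) x := by
      intro x hx
      have := (hFdiff x).hasDerivAt.hasDerivWithinAt (s := Set.Ici x)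
      rwa [hFderiv x hx.1] at this
    exact constant_of_has_deriv_right_zero hcont hder t (Set.mem_Icc.2 ⟨ht, le_rfl⟩)
  intro t ht
  have hF0 : F 0 = 0 := by simp [hF, h0c, h0cs]
  have : Real.log (Ψc t) = ν * Real.log (Ψcs t) := by
    have := hFconst t ht
    rw [hF0] at this
    simpa [hF, sub_eq_zero] using this
  have := congrArg Real.exp this
  rwa [Real.exp_log (hposc t), mul_comm, Real.exp_mul, Real.exp_log (hposcs t)] at this
end

section
/- Let A_c, A₁, A₂, A_c*, A₁*, A₂* be real random variables, each strictly positive almost surely and each with support equal to (0,∞) (in particular P(X < ε) > 0 for every ε > 0). Let Ψ denote the Laplace transform, e.g. Ψ_c(x) = E[exp(-A_c x)], and write h(x) = (log Ψ)'(x) for the logarithmic derivative. Suppose that for all x₁, x₂ ≥ 0: (h_c(x₁+x₂) + h₁(x₁)) · (h_c*(x₁+x₂) + h₂*(x₂)) = (h_c*(x₁+x₂) + h₁*(x₁)) · (h_c(x₁+x₂) + h₂(x₂)). Then there exists ν > 0 such that Ψ_c(t) = Ψ_c*(t)^ν, Ψ₁(t) = Ψ₁*(t)^ν, and Ψ₂(t)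 = Ψ₂*(t)^ν for all t ≥ 0. -/
open MeasureTheory Filter Real Set Metric Topology
open scoped ENNReal

set_option linter.unusedSectionVars false
set_option linter.unusedVariables false
set_option maxHeartbeats 1000000

lemma const_of_deriv0 (f : ℝ → ℝ) (hf : ∀ x : ℝ, 0 < x → HasDerivAt f 0 x)
    {s t : ℝ} (hs : 0 < s) (hst : s < t) : f s = f t := by
  obtain ⟨ξ, hξ, hslope⟩ := exists_hasDerivAt_eq_slope f (fun _ => (0:ℝ)) hst
    (fun u hu => (hf u (lt_of_lt_of_le hs hu.1)).continuousAt.continuousWithinAt)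
    (fun u hu => hf u (lt_trans hs hu.1))
  rcases div_eq_zero_iff.mp hslope.symm with h | h
  · linarith
  · linarith

lemma strict_mono_aux (f df : ℝ → ℝ) (hf : ∀ x : ℝ, 0 < x → HasDerivAt f (df x) x)
    (hpos : ∀ x : ℝ, 0 < x → 0 < df x) {s t : ℝ} (hs : 0 < s) (hst : s < t) : f s < f t := by
  obtain ⟨ξ, hξ, hslope⟩ := exists_hasDerivAt_eq_slope f df hst
    (fun u hu => (hf u (lt_of_lt_of_le hs hu.1)).continuousAt.continuousWithinAt)
    (fun u hu => hf u (lt_trans hs hu.1))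
  have h1 : 0 < df ξ := hpos ξ (lt_trans hs hξ.1)
  rw [hslope] at h1
  have h2 : 0 < t - s := by linarith
  have h3 : (f t - f s)/(t-s) * (t-s) = f t - f s := div_mul_cancel₀ _ (by linarith)
  nlinarith [mul_pos h1 h2]

section SaraAux

variable {Ω : Type*} [MeasurableSpace Ω] {μ : Measure Ω} [IsProbabilityMeasure μ]
variable {X : Ω → ℝ}

lemma pow_mul_exp_le' (k : ℕ) {t x : ℝ} (ht : 0 ≤ t) (hx : 0 < x) :
    t ^ k * Real.exp (-(t * x)) ≤ (k.factorial : ℝ) * (2 / x) ^ k := by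
  have h1 : t ^ k ≤ (k.factorial : ℝ) * (2/x)^k * Real.exp (t * x / 2) := by
    have := Real.pow_div_factorial_le_exp (x := t * x / 2) (by positivity) k
    have h2 : (t * x / 2) ^ k / (k.factorial : ℝ) ≤ Real.exp (t * x / 2) := this
    have h3 : (t * x / 2) ^ k = t ^ k * (x / 2) ^ k := by rw [← mul_pow]; ring_nf
    rw [h3] at h2
    have hxk : (0:ℝ) < (x/2)^k := by positivity
    have hfk : (0:ℝ) < (k.factorial : ℝ) := by positivity
    rw [div_le_iff₀ hfk] at h2
    have h4 : t ^ k = (t ^ k * (x/2)^k) * (2/x)^k := by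
      rw [mul_assoc, ← mul_pow]
      have : (x/2) * (2/x) = 1 := by field_simp
      rw [this, one_pow, mul_one]
    rw [h4]
    calc (t ^ k * (x/2)^k) * (2/x)^k ≤ (Real.exp (t*x/2) * k.factorial) * (2/x)^k := by
          apply mul_le_mul_of_nonneg_right h2 (by positivity)
      _ = (k.factorial : ℝ) * (2/x)^k * Real.exp (t * x / 2) := by ring
  calc t ^ k * Real.exp (-(t * x))
      ≤ ((k.factorial : ℝ) * (2/x)^k * Real.exp (t * x / 2)) * Real.exp (-(t*x)) := by
        apply mul_le_mul_of_nonneg_right h1 (Real.exp_pos _).le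
    _ = (k.factorial : ℝ) * (2/x)^k * Real.exp (t * x / 2 - t * x) := by
        rw [mul_assoc, ← Real.exp_add]; ring_nf
    _ ≤ (k.factorial : ℝ) * (2/x)^k * 1 := by
        apply mul_le_mul_of_nonneg_left _ (by positivity)
        rw [Real.exp_le_one_iff]; nlinarith
    _ = (k.factorial : ℝ) * (2/x)^k := mul_one _

lemma decay_pt (k : ℕ) {ε t x : ℝ} (hε : 0 < ε) (ht : ε ≤ t) (hx : (k+2)/ε ≤ x) :
    t^(k+1) * Real.exp (-(t*x)) ≤ ε^(k+1) * Real.exp (-(ε*x)) := by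
  have hs1 : 1 ≤ t/ε := (one_le_div hε).2 ht
  set s := t/ε with hsdef
  have hts : t = ε * s := by rw [hsdef]; field_simp
  have e1 : s ≤ Real.exp (s-1) := by
    have := Real.add_one_le_exp (s-1); linarith
  have h2 : s^(k+2) ≤ Real.exp ((s-1)*(k+2)) := by
    have : Real.exp ((s-1)*(k+2)) = (Real.exp (s-1))^(k+2) := by
      rw [← Real.exp_nat_mul]; push_cast; ring_nf
    rw [this]
    exact pow_le_pow_left₀ (by linarith) e1 _
  have h3 : (s-1)*(k+2) ≤ (t-ε)*x := by
    have hys : s - 1 = (t - ε)/ε := by rw [hsdef]; field_simp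
    rw [hys, div_mul_eq_mul_div, mul_comm (t-ε) ((k:ℝ)+2), mul_div_assoc]
    have htε : 0 ≤ t - ε := by linarith
    calc ((k:ℝ)+2) * ((t-ε)/ε) = (t-ε) * (((k:ℝ)+2)/ε) := by ring
      _ ≤ (t-ε) * x := by
          apply mul_le_mul_of_nonneg_left _ htε
          exact_mod_cast hx
      _ = (t-ε)*x := rfl
  have key : t^(k+1) ≤ ε^(k+1) * Real.exp ((t-ε)*x) := by
    calc t^(k+1) = ε^(k+1) * s^(k+1) := by rw [hts, mul_pow]
      _ ≤ ε^(k+1) * s^(k+2) := by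
          apply mul_le_mul_of_nonneg_left _ (by positivity)
          exact pow_le_pow_right₀ (by linarith) (by omega)
      _ ≤ ε^(k+1) * Real.exp ((s-1)*(k+2)) := by
          exact mul_le_mul_of_nonneg_left h2 (by positivity)
      _ ≤ ε^(k+1) * Real.exp ((t-ε)*x) := by
          exact mul_le_mul_of_nonneg_left (Real.exp_le_exp.2 h3) (by positivity)
  calc t^(k+1) * Real.exp (-(t*x)) ≤ (ε^(k+1) * Real.exp ((t-ε)*x)) * Real.exp (-(t*x)) :=
        mul_le_mul_of_nonneg_right key (Real.exp_pos _).le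
    _ = ε^(k+1) * Real.exp (-(ε*x)) := by rw [mul_assoc, ← Real.exp_add]; ring_nf

lemma meas_aux (hX : Measurable X) (k : ℕ) (x : ℝ) :
    AEStronglyMeasurable (fun ω => (X ω)^k * Real.exp (-(X ω * x))) μ :=
  ((hX.pow_const k).mul ((hX.mul_const x).neg.exp)).aestronglyMeasurable

lemma integrable_aux (hX : Measurable X) (hp : ∀ᵐ ω ∂μ, 0 < X ω) (k : ℕ) {x : ℝ} (hx : 0 < x) :
    Integrable (fun ω => (X ω)^k * Real.exp (-(X ω * x))) μ := by
  refine Integrable.mono' (integrable_const ((k.factorial : ℝ) * (2 / x) ^ k)) (meas_aux hX k x) ?_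
  filter_upwards [hp] with ω hω
  rw [Real.norm_eq_abs, abs_of_nonneg (by positivity)]
  exact pow_mul_exp_le' k hω.le hx

lemma full_measure_aux (hp : ∀ᵐ ω ∂μ, 0 < X ω) : μ {ω | 0 < X ω} = 1 := by
  have h1 : μ {ω | 0 < X ω}ᶜ = 0 := by
    rw [ae_iff] at hp; rw [compl_setOf]; exact hp
  rw [← measure_univ (μ := μ)]
  exact measure_congr (Filter.eventuallyEq_univ.2 (by rw [mem_ae_iff]; exact h1))

lemma integral_pos_aux (hX : Measurable X) (hp : ∀ᵐ ω ∂μ, 0 < X ω) (k : ℕ) {x : ℝ}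
    (hint : Integrable (fun ω => (X ω)^k * Real.exp (-(X ω * x))) μ) :
    0 < ∫ ω, (X ω)^k * Real.exp (-(X ω * x)) ∂μ := by
  rw [integral_pos_iff_support_of_nonneg_ae _ hint]
  · have hsub : {ω | 0 < X ω} ⊆ Function.support (fun ω => (X ω)^k * Real.exp (-(X ω * x))) := by
      intro ω hω
      have hω' : 0 < X ω := hω
      exact ne_of_gt (by positivity)
    calc (0:ENNReal) < 1 := by norm_num
      _ = μ {ω | 0 < X ω} := (full_measure_aux hp).symm
      _ ≤ _ := measure_mono hsub
  · filter_upwards [hp] with ω hω; positivity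

lemma hasDerivAt_I (hX : Measurable X) (hp : ∀ᵐ ω ∂μ, 0 < X ω) (k : ℕ) {x : ℝ} (hx : 0 < x) :
    HasDerivAt (fun s => ∫ ω, (X ω)^k * Real.exp (-(X ω * s)) ∂μ)
      (-(∫ ω, (X ω)^(k+1) * Real.exp (-(X ω * x)) ∂μ)) x := by
  have h := hasDerivAt_integral_of_dominated_loc_of_deriv_le
    (F := fun s ω => (X ω)^k * Real.exp (-(X ω * s)))
    (F' := fun s ω => -((X ω)^(k+1) * Real.exp (-(X ω * s))))
    (x₀ := x) (μ := μ) (bound := fun _ => ((k+1).factorial : ℝ) * (4 / x) ^ (k+1))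
    (Metric.ball_mem_nhds x (half_pos hx))
    (Eventually.of_forall fun s => meas_aux hX k s)
    (integrable_aux hX hp k hx)
    ((meas_aux hX (k+1) x).neg)
    ?_ (integrable_const _) ?_
  · have := h.2
    rwa [integral_neg] at this
  · filter_upwards [hp] with ω hω s hs
    rw [norm_neg, Real.norm_eq_abs, abs_of_nonneg (by positivity)]
    have hs2 : x/2 < s := by
      have := abs_lt.1 (mem_ball_iff_norm.1 hs); linarith [this.1]
    calc (X ω)^(k+1) * Real.exp (-(X ω * s))
        ≤ (X ω)^(k+1) * Real.exp (-(X ω * (x/2))) := by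
          apply mul_le_mul_of_nonneg_left _ (by positivity)
          apply Real.exp_le_exp.2
          simp only [neg_le_neg_iff]
          exact mul_le_mul_of_nonneg_left hs2.le hω.le
      _ ≤ ((k+1).factorial : ℝ) * (2/(x/2))^(k+1) := pow_mul_exp_le' (k+1) hω.le (by positivity)
      _ = ((k+1).factorial : ℝ) * (4/x)^(k+1) := by
          congr 1
          congr 1
          rw [div_div_eq_mul_div]
          norm_num
  · filter_upwards [hp] with ω hω s hs
    have h1 : HasDerivAt (fun s : ℝ => -(X ω * s)) (-(X ω)) s := by
      simpa [Pi.neg_def] using ((hasDerivAt_id s).const_mul (X ω)).neg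
    have h2 := (h1.exp).const_mul ((X ω)^k)
    convert h2 using 1
    · rfl
    rw [pow_succ]; ring

lemma ratio_tendsto (hX : Measurable X) (hp : ∀ᵐ ω ∂μ, 0 < X ω)
    (hsupp : ∀ s t : ℝ, 0 ≤ s → s < t → 0 < μ {ω | X ω ∈ Set.Ioo s t}) (k : ℕ) :
    Tendsto (fun x => (∫ ω, (X ω)^(k+1) * Real.exp (-(X ω * x)) ∂μ) /
      (∫ ω, (X ω)^k * Real.exp (-(X ω * x)) ∂μ)) atTop (𝓝 0) := by
  rw [Metric.tendsto_atTop]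
  intro δ hδ
  set ε := δ/4 with hεdef
  have hε : 0 < ε := by positivity
  set T := {ω | X ω ∈ Set.Ioo (ε/4) (ε/2)} with hTdef
  have hT : MeasurableSet T := hX (measurableSet_Ioo)
  have hμT : 0 < (μ T).toReal :=
    ENNReal.toReal_pos (hsupp (ε/4) (ε/2) (by positivity) (by linarith)).ne' (measure_ne_top μ T)
  set p := (μ T).toReal with hpdef
  set C := ε^(k+1)/((ε/4)^k * p) with hCdef
  have hC : 0 < C := by positivity
  refine ⟨max (max ((k+2)/ε) 1) (2*C/ε^2), fun x hx => ?_⟩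
  have hx1 : (1:ℝ) ≤ x := le_trans (le_max_of_le_left (le_max_right _ _)) hx
  have hx0 : 0 < x := lt_of_lt_of_le one_pos hx1
  have hxk : ((k:ℝ)+2)/ε ≤ x := le_trans (le_max_of_le_left (le_max_left _ _)) hx
  have hxC : 2*C/ε^2 ≤ x := le_trans (le_max_right _ _) hx
  have hintk := integrable_aux hX hp k hx0
  have hintk1 := integrable_aux hX hp (k+1) hx0
  set Ik := ∫ ω, (X ω)^k * Real.exp (-(X ω * x)) ∂μ with hIkdef
  set Ik1 := ∫ ω, (X ω)^(k+1) * Real.exp (-(X ω * x)) ∂μ with hIk1def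
  have hIkpos : 0 < Ik := integral_pos_aux hX hp k hintk
  have hIk1pos : 0 < Ik1 := integral_pos_aux hX hp (k+1) hintk1
  -- lower bound for Ik
  set L := (ε/4)^k * Real.exp (-(ε/2*x)) * p with hLdef
  have hLpos : 0 < L := by positivity
  have hlow : L ≤ Ik := by
    have h1 : (ε/4)^k * Real.exp (-(ε/2*x)) * p ≤ ∫ ω in T, (X ω)^k * Real.exp (-(X ω * x)) ∂μ := by
      apply setIntegral_ge_of_const_le_real hT (measure_ne_top μ T)
      · intro ω hω
        have hω1 : ε/4 < X ω := hω.1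
        have hω2 : X ω < ε/2 := hω.2
        have e1 : (ε/4)^k ≤ (X ω)^k := pow_le_pow_left₀ (by positivity) hω1.le k
        have e2 : Real.exp (-(ε/2*x)) ≤ Real.exp (-(X ω*x)) := by
          apply Real.exp_le_exp.2
          simp only [neg_le_neg_iff]
          exact mul_le_mul_of_nonneg_right hω2.le hx0.le
        exact mul_le_mul e1 e2 (Real.exp_pos _).le (pow_nonneg (by linarith) k)
      · exact hintk.integrableOn
    calc L ≤ ∫ ω in T, (X ω)^k * Real.exp (-(X ω * x)) ∂μ := h1
      _ ≤ Ik := by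
          apply setIntegral_le_integral hintk
          filter_upwards [hp] with ω hω; positivity
  -- upper bound for Ik1
  set S := {ω | X ω ≤ ε} with hSdef
  have hS : MeasurableSet S := hX measurableSet_Iic
  have hsplit : Ik1 = (∫ ω in S, (X ω)^(k+1) * Real.exp (-(X ω * x)) ∂μ)
      + ∫ ω in Sᶜ, (X ω)^(k+1) * Real.exp (-(X ω * x)) ∂μ :=
    (integral_add_compl hS hintk1).symm
  have hup1 : (∫ ω in S, (X ω)^(k+1) * Real.exp (-(X ω * x)) ∂μ) ≤ ε * Ik := by
    have h1 : (∫ ω in S, (X ω)^(k+1) * Real.exp (-(X ω * x)) ∂μ)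
        ≤ ∫ ω in S, ε * ((X ω)^k * Real.exp (-(X ω * x))) ∂μ := by
      apply setIntegral_mono_ae_restrict hintk1.integrableOn
        (hintk.integrableOn.const_mul ε)
      filter_upwards [ae_restrict_of_ae hp, ae_restrict_mem hS] with ω hω hωS
      have : (X ω)^(k+1) * Real.exp (-(X ω * x))
          = (X ω) * ((X ω)^k * Real.exp (-(X ω * x))) := by rw [pow_succ]; ring
      rw [this]
      exact mul_le_mul_of_nonneg_right hωS (by positivity)
    calc (∫ ω in S, (X ω)^(k+1) * Real.exp (-(X ω * x)) ∂μ)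
        ≤ ∫ ω in S, ε * ((X ω)^k * Real.exp (-(X ω * x))) ∂μ := h1
      _ = ε * ∫ ω in S, (X ω)^k * Real.exp (-(X ω * x)) ∂μ := by rw [integral_const_mul]
      _ ≤ ε * Ik := by
          apply mul_le_mul_of_nonneg_left _ hε.le
          apply setIntegral_le_integral hintk
          filter_upwards [hp] with ω hω; positivity
  set E := ε^(k+1) * Real.exp (-(ε*x)) with hEdef
  have hEpos : 0 < E := by positivity
  have hup2 : (∫ ω in Sᶜ, (X ω)^(k+1) * Real.exp (-(X ω * x)) ∂μ) ≤ E := by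
    have h1 : (∫ ω in Sᶜ, (X ω)^(k+1) * Real.exp (-(X ω * x)) ∂μ)
        ≤ ∫ _ in Sᶜ, E ∂μ := by
      apply setIntegral_mono_ae_restrict hintk1.integrableOn (integrableOn_const (measure_ne_top _ _))
      filter_upwards [ae_restrict_mem hS.compl] with ω hωS
      have hωε : ε ≤ X ω := by
        have h7 : ¬ (X ω ≤ ε) := hωS
        linarith [lt_of_not_ge h7]
      exact decay_pt k hε hωε hxk
    calc (∫ ω in Sᶜ, (X ω)^(k+1) * Real.exp (-(X ω * x)) ∂μ) ≤ ∫ _ in Sᶜ, E ∂μ := h1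
      _ = E * (μ Sᶜ).toReal := by rw [setIntegral_const, smul_eq_mul, measureReal_def]; ring
      _ ≤ E * 1 := by
          apply mul_le_mul_of_nonneg_left _ hEpos.le
          exact_mod_cast ENNReal.toReal_le_of_le_ofReal one_pos.le (by simpa using prob_le_one)
      _ = E := mul_one E
  -- combine
  have hupper : Ik1 ≤ ε * Ik + E := by rw [hsplit]; exact add_le_add hup1 hup2
  have hEL : E / L = C * Real.exp (-(ε/2*x)) := by
    have hexp2 : Real.exp (-(ε/2*x)) * Real.exp (-(ε/2*x)) = Real.exp (-(ε*x)) := by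
      rw [← Real.exp_add]; ring_nf
    have hErw : E = L * (C * Real.exp (-(ε/2*x))) := by
      rw [hLdef, hCdef, hEdef, ← hexp2]
      have h4 : ((ε/4):ℝ)^k ≠ 0 := by positivity
      field_simp
    rw [hErw, mul_comm L, mul_div_assoc, div_self hLpos.ne', mul_one]
  have hexp : Real.exp (-(ε/2*x)) ≤ 2/(ε*x) := by
    have h1 : ε*x/2 ≤ Real.exp (ε/2*x) := by
      have := Real.add_one_le_exp (ε/2*x); linarith
    have h3 : (0:ℝ) < ε*x/2 := by positivity
    rw [Real.exp_neg]
    calc (Real.exp (ε/2*x))⁻¹ ≤ (ε*x/2)⁻¹ := by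
          apply inv_anti₀ h3 h1
      _ = 2/(ε*x) := by rw [inv_div]
  have hfinal : Ik1 / Ik < δ := by
    have step1 : Ik1 / Ik ≤ ε + E / Ik := by
      have h1 : Ik1 / Ik ≤ (ε * Ik + E) / Ik := (div_le_div_iff_of_pos_right hIkpos).2 hupper
      have h2 : (ε * Ik + E) / Ik = ε + E / Ik := by field_simp
      linarith [h1, h2.symm.le]
    have step2 : E / Ik ≤ E / L := div_le_div_of_nonneg_left hEpos.le hLpos hlow
    have step3 : E / L ≤ C * (2/(ε*x)) := by
      rw [hEL]
      exact mul_le_mul_of_nonneg_left hexp hC.le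
    have step4 : C * (2/(ε*x)) ≤ ε := by
      have hεx : 2*C ≤ ε*(ε*x) := by
        have h5 := mul_le_mul_of_nonneg_left hxC (mul_pos hε hε).le
        have h6 : ε*ε*(2*C/ε^2) = 2*C := by field_simp
        nlinarith
      have h2 : 2/(ε*x) ≤ ε/C := by
        rw [div_le_div_iff₀ (by positivity) hC]
        nlinarith
      calc C * (2/(ε*x)) ≤ C * (ε/C) := mul_le_mul_of_nonneg_left h2 hC.le
        _ = ε := mul_div_cancel₀ ε hC.ne'
    have : Ik1 / Ik ≤ 2*ε := by linarith
    linarith [this]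
  rw [Real.dist_eq, sub_zero, abs_of_nonneg (div_pos hIk1pos hIkpos).le]
  exact hfinal

lemma var_pos (hX : Measurable X) (hp : ∀ᵐ ω ∂μ, 0 < X ω)
    (hsupp : ∀ s t : ℝ, 0 ≤ s → s < t → 0 < μ {ω | X ω ∈ Set.Ioo s t}) {x : ℝ} (hx : 0 < x) :
    0 < (∫ ω, (X ω)^2 * Real.exp (-(X ω * x)) ∂μ) * (∫ ω, (X ω)^0 * Real.exp (-(X ω * x)) ∂μ)
      - (∫ ω, (X ω)^1 * Real.exp (-(X ω * x)) ∂μ)^2 := by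
  have h0 := integrable_aux hX hp 0 hx
  have h1 := integrable_aux hX hp 1 hx
  have h2 := integrable_aux hX hp 2 hx
  set f : ℕ → Ω → ℝ := fun k ω => (X ω)^k * Real.exp (-(X ω * x)) with hfdef
  set G : Ω × Ω → ℝ := fun z => (X z.1 - X z.2)^2 * (Real.exp (-(X z.1 * x)) * Real.exp (-(X z.2 * x)))
    with hGdef
  have hGeq : ∀ z : Ω × Ω, G z = f 2 z.1 * f 0 z.2 - 2 * (f 1 z.1 * f 1 z.2) + f 0 z.1 * f 2 z.2 := by
    intro z; simp only [hGdef, hfdef]; ring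
  have hint20 : Integrable (fun z : Ω × Ω => f 2 z.1 * f 0 z.2) (μ.prod μ) := h2.mul_prod h0
  have hint11 : Integrable (fun z : Ω × Ω => f 1 z.1 * f 1 z.2) (μ.prod μ) := h1.mul_prod h1
  have hint02 : Integrable (fun z : Ω × Ω => f 0 z.1 * f 2 z.2) (μ.prod μ) := h0.mul_prod h2
  have hintG : Integrable G (μ.prod μ) := by
    have : G = fun z => f 2 z.1 * f 0 z.2 - 2 * (f 1 z.1 * f 1 z.2) + f 0 z.1 * f 2 z.2 :=
      funext hGeq
    rw [this]
    exact ((hint20.sub (hint11.const_mul 2)).add hint02)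
  have hGval : ∫ z, G z ∂(μ.prod μ)
      = 2 * ((∫ ω, f 2 ω ∂μ) * (∫ ω, f 0 ω ∂μ) - (∫ ω, f 1 ω ∂μ)^2) := by
    have hfg : Integrable (fun z : Ω × Ω => f 2 z.1 * f 0 z.2 - 2 * (f 1 z.1 * f 1 z.2))
        (μ.prod μ) := by
      exact hint20.sub (hint11.const_mul 2)
    have e1 : ∫ z, G z ∂(μ.prod μ)
        = (∫ z : Ω × Ω, f 2 z.1 * f 0 z.2 ∂(μ.prod μ))
          - 2 * (∫ z : Ω × Ω, f 1 z.1 * f 1 z.2 ∂(μ.prod μ))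
          + ∫ z : Ω × Ω, f 0 z.1 * f 2 z.2 ∂(μ.prod μ) := by
      calc ∫ z, G z ∂(μ.prod μ)
          = ∫ z : Ω × Ω, (f 2 z.1 * f 0 z.2 - 2 * (f 1 z.1 * f 1 z.2) + f 0 z.1 * f 2 z.2)
            ∂(μ.prod μ) := by simp only [hGeq]
        _ = (∫ z : Ω × Ω, (f 2 z.1 * f 0 z.2 - 2 * (f 1 z.1 * f 1 z.2)) ∂(μ.prod μ))
            + ∫ z : Ω × Ω, f 0 z.1 * f 2 z.2 ∂(μ.prod μ) := integral_add hfg hint02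
        _ = _ := by
            rw [integral_sub hint20 (hint11.const_mul 2), integral_const_mul]
    rw [e1, integral_prod_mul, integral_prod_mul, integral_prod_mul]
    ring
  have hGpos : 0 < ∫ z, G z ∂(μ.prod μ) := by
    set R : Set (Ω × Ω) := {ω | X ω ∈ Set.Ioo (1:ℝ) 2} ×ˢ {ω | X ω ∈ Set.Ioo (3:ℝ) 4} with hRdef
    have hRmeas : MeasurableSet R := (hX measurableSet_Ioo).prod (hX measurableSet_Ioo)
    have hRμ : 0 < ((μ.prod μ) R).toReal := by
      rw [hRdef, Measure.prod_prod]
      exact ENNReal.toReal_pos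
        (ENNReal.mul_pos (hsupp 1 2 (by norm_num) (by norm_num)).ne'
          (hsupp 3 4 (by norm_num) (by norm_num)).ne').ne'
        (ENNReal.mul_ne_top (measure_ne_top _ _) (measure_ne_top _ _))
    set cst := Real.exp (-(2*x)) * Real.exp (-(4*x)) with hcst
    have hcstpos : 0 < cst := by positivity
    have hR : cst * ((μ.prod μ) R).toReal ≤ ∫ z in R, G z ∂(μ.prod μ) := by
      apply setIntegral_ge_of_const_le_real hRmeas (measure_ne_top _ _)
      · rintro ⟨ω₁, ω₂⟩ hzR
        obtain ⟨hz1, hz2⟩ := hzR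
        have h11 : (1:ℝ) < X ω₁ := hz1.1
        have h12 : X ω₁ < 2 := hz1.2
        have h23 : (3:ℝ) < X ω₂ := hz2.1
        have h24 : X ω₂ < 4 := hz2.2
        have hsq : (1:ℝ) ≤ (X ω₁ - X ω₂)^2 := by nlinarith
        have he1 : Real.exp (-(2*x)) ≤ Real.exp (-(X ω₁ * x)) :=
          Real.exp_le_exp.2 (by simp only [neg_le_neg_iff]; nlinarith)
        have he2 : Real.exp (-(4*x)) ≤ Real.exp (-(X ω₂ * x)) :=
          Real.exp_le_exp.2 (by simp only [neg_le_neg_iff]; nlinarith)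
        calc cst = 1 * (Real.exp (-(2*x)) * Real.exp (-(4*x))) := by rw [one_mul]
          _ ≤ (X ω₁ - X ω₂)^2 * (Real.exp (-(X ω₁ * x)) * Real.exp (-(X ω₂ * x))) := by
              apply mul_le_mul hsq _ (by positivity) (by positivity)
              exact mul_le_mul he1 he2 (Real.exp_pos _).le (Real.exp_pos _).le
          _ = G (ω₁, ω₂) := rfl
      · exact hintG.integrableOn
    have hRle : ∫ z in R, G z ∂(μ.prod μ) ≤ ∫ z, G z ∂(μ.prod μ) := by
      apply setIntegral_le_integral hintG
      apply ae_of_all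
      intro z
      simp only [hGdef]
      positivity
    nlinarith [mul_pos hcstpos hRμ]
  have := hGval ▸ hGpos
  simp only [hfdef] at this
  linarith

lemma tendsto_I0_at_zero (hX : Measurable X) (hp : ∀ᵐ ω ∂μ, 0 < X ω) :
    Tendsto (fun x => ∫ ω, Real.exp (-(X ω * x)) ∂μ) (𝓝[>] (0:ℝ)) (𝓝 1) := by
  have h := tendsto_integral_filter_of_dominated_convergence (μ := μ)
    (F := fun (x : ℝ) ω => Real.exp (-(X ω * x))) (f := fun _ => (1:ℝ)) (bound := fun _ => (1:ℝ))
    (l := 𝓝[>] (0:ℝ))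
    ?_ ?_ (integrable_const 1) ?_
  · simpa using h
  · exact Eventually.of_forall fun x => ((hX.mul_const x).neg.exp).aestronglyMeasurable
  · filter_upwards [self_mem_nhdsWithin] with x hx
    filter_upwards [hp] with ω hω
    rw [Real.norm_eq_abs, abs_of_nonneg (Real.exp_pos _).le, Real.exp_le_one_iff]
    have : (0:ℝ) < x := hx
    nlinarith
  · filter_upwards [hp] with ω hω
    have hcont : Continuous fun x : ℝ => Real.exp (-(X ω * x)) := by continuity
    have h9 := (hcont.tendsto 0).mono_left (nhdsWithin_le_nhds (s := Set.Ioi (0:ℝ)))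
    simpa using h9

noncomputable def dhF (μ : Measure Ω) (X : Ω → ℝ) : ℝ → ℝ := fun x =>
  ((∫ ω, (X ω)^2 * Real.exp (-(X ω * x)) ∂μ) * (∫ ω, (X ω)^0 * Real.exp (-(X ω * x)) ∂μ)
    - (∫ ω, (X ω)^1 * Real.exp (-(X ω * x)) ∂μ)^2)
  / (∫ ω, (X ω)^0 * Real.exp (-(X ω * x)) ∂μ)^2

section hlayer

variable (hX : Measurable X) (hp : ∀ᵐ ω ∂μ, 0 < X ω)
  (hsupp : ∀ s t : ℝ, 0 ≤ s → s < t → 0 < μ {ω | X ω ∈ Set.Ioo s t})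
  {Ψ h : ℝ → ℝ}
  (hΨ : ∀ x : ℝ, Ψ x = ∫ ω, Real.exp (-(X ω * x)) ∂μ)
  (hh : ∀ x : ℝ, h x = deriv (fun s => Real.log (Ψ s)) x)

include hX hp hΨ

lemma psi_eq0 : Ψ = fun x => ∫ ω, (X ω)^0 * Real.exp (-(X ω * x)) ∂μ := by
  funext x; rw [hΨ]; simp

lemma psi_zero : Ψ 0 = 1 := by rw [hΨ]; simp

lemma psi_pos {x : ℝ} (hx : 0 < x) : 0 < Ψ x := by
  rw [psi_eq0 hX hp hΨ]
  exact integral_pos_aux hX hp 0 (integrable_aux hX hp 0 hx)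

lemma hasDerivAt_psi {x : ℝ} (hx : 0 < x) :
    HasDerivAt Ψ (-(∫ ω, (X ω)^1 * Real.exp (-(X ω * x)) ∂μ)) x := by
  rw [psi_eq0 hX hp hΨ]
  exact hasDerivAt_I hX hp 0 hx

include hh

lemma h_eq {x : ℝ} (hx : 0 < x) :
    h x = -((∫ ω, (X ω)^1 * Real.exp (-(X ω * x)) ∂μ)
      / (∫ ω, (X ω)^0 * Real.exp (-(X ω * x)) ∂μ)) := by
  have hpos := psi_pos hX hp hΨ hx
  have hlog := (hasDerivAt_psi hX hp hΨ hx).log hpos.ne'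
  rw [hh x, hlog.deriv, psi_eq0 hX hp hΨ, neg_div]

lemma h_neg {x : ℝ} (hx : 0 < x) : h x < 0 := by
  rw [h_eq hX hp hΨ hh hx]
  have h1 := integral_pos_aux hX hp 1 (integrable_aux hX hp 1 hx)
  have h0 := integral_pos_aux hX hp 0 (integrable_aux hX hp 0 hx)
  simp only [neg_neg, neg_lt_zero]
  positivity

lemma hasDerivAt_h {x : ℝ} (hx : 0 < x) : HasDerivAt h (dhF μ X x) x := by
  set η : ℝ → ℝ := fun s => -((∫ ω, (X ω)^1 * Real.exp (-(X ω * s)) ∂μ)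
    / (∫ ω, (X ω)^0 * Real.exp (-(X ω * s)) ∂μ)) with hηdef
  have h0 := integral_pos_aux hX hp 0 (integrable_aux hX hp 0 hx)
  have hη : HasDerivAt η (dhF μ X x) x := by
    have hdiv := ((hasDerivAt_I hX hp 1 hx).div (hasDerivAt_I hX hp 0 hx) h0.ne').neg
    convert hdiv using 1
    · rfl
    · rfl
    · rfl
    rw [dhF]
    simp only [Nat.reduceAdd, pow_zero, one_mul, pow_one] at h0 ⊢
    generalize (∫ ω, Real.exp (-(X ω * x)) ∂μ) = I0 at h0 ⊢
    generalize (∫ ω, X ω * Real.exp (-(X ω * x)) ∂μ) = I1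
    generalize (∫ ω, X ω ^ 2 * Real.exp (-(X ω * x)) ∂μ) = I2
    field_simp
    ring
  apply hη.congr_of_eventuallyEq
  filter_upwards [Ioi_mem_nhds hx] with s hs
  exact h_eq hX hp hΨ hh hs

include hsupp

lemma h_tendsto : Tendsto h atTop (𝓝 0) := by
  have := (ratio_tendsto hX hp hsupp 0).neg
  rw [neg_zero] at this
  apply this.congr'
  filter_upwards [eventually_gt_atTop (0:ℝ)] with x hx
  exact (h_eq hX hp hΨ hh hx).symm

lemma dh_pos {x : ℝ} (hx : 0 < x) : 0 < dhF μ X x := by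
  have h0 := integral_pos_aux hX hp 0 (integrable_aux hX hp 0 hx)
  have := var_pos hX hp hsupp hx
  rw [dhF]
  positivity

lemma dh_ratio_tendsto : Tendsto (fun x => |dhF μ X x| / |h x|) atTop (𝓝 0) := by
  have := (ratio_tendsto hX hp hsupp 1).sub (ratio_tendsto hX hp hsupp 0)
  rw [sub_zero] at this
  apply this.congr'
  filter_upwards [eventually_gt_atTop (0:ℝ)] with x hx
  have h0 := integral_pos_aux hX hp 0 (integrable_aux hX hp 0 hx)
  have h1 := integral_pos_aux hX hp 1 (integrable_aux hX hp 1 hx)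
  have hd := dh_pos hX hp hsupp hΨ hh hx
  rw [abs_of_pos hd, abs_of_neg (h_neg hX hp hΨ hh hx), h_eq hX hp hΨ hh hx, dhF, neg_neg]
  simp only [show (1+1)=2 from rfl, show (0+1)=1 from rfl]
  have e0 : (∫ ω, Real.exp (-(X ω * x)) ∂μ) ≠ 0 := by
    have := h0.ne'; simpa using this
  have e1 : (∫ ω, X ω * Real.exp (-(X ω * x)) ∂μ) ≠ 0 := by
    have := h1.ne'; simpa using this
  simp only [pow_zero, one_mul, pow_one]
  generalize (∫ ω, Real.exp (-(X ω * x)) ∂μ) = I0 at e0 ⊢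
  generalize (∫ ω, X ω * Real.exp (-(X ω * x)) ∂μ) = I1 at e1 ⊢
  generalize (∫ ω, X ω ^ 2 * Real.exp (-(X ω * x)) ∂μ) = I2
  field_simp

lemma dh_tendsto : Tendsto (dhF μ X) atTop (𝓝 0) := by
  have habs : Tendsto (fun x => |h x|) atTop (𝓝 0) := by
    have := (h_tendsto hX hp hsupp hΨ hh).abs; simpa using this
  have := (dh_ratio_tendsto hX hp hsupp hΨ hh).mul habs
  rw [mul_zero] at this
  apply this.congr'
  filter_upwards [eventually_gt_atTop (0:ℝ)] with x hx
  have hd := dh_pos hX hp hsupp hΨ hh hx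
  have hn := h_neg hX hp hΨ hh hx
  rw [abs_of_pos hd, abs_of_neg hn, div_mul_cancel₀ _ (neg_ne_zero.2 hn.ne)]

end hlayer

lemma hasDerivAt_logpsi {X : Ω → ℝ} (hX : Measurable X) (hp : ∀ᵐ ω ∂μ, 0 < X ω) {Ψ h : ℝ → ℝ}
    (hΨ : ∀ x : ℝ, Ψ x = ∫ ω, Real.exp (-(X ω * x)) ∂μ)
    (hh : ∀ x : ℝ, h x = deriv (fun s => Real.log (Ψ s)) x) {x : ℝ} (hx : 0 < x) :
    HasDerivAt (fun u => Real.log (Ψ u)) (h x) x := by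
  have hd := (hasDerivAt_psi hX hp hΨ hx).log (psi_pos hX hp hΨ hx).ne'
  rw [h_eq hX hp hΨ hh hx]
  have hps : Ψ x = ∫ ω, (X ω)^0 * Real.exp (-(X ω * x)) ∂μ := by rw [hΨ x]; simp
  convert hd using 1
  rw [hps, neg_div]

lemma sara_step5 {X Xs : Ω → ℝ}
    (hX : Measurable X) (hp : ∀ᵐ ω ∂μ, 0 < X ω)
    (hXs : Measurable Xs) (hps : ∀ᵐ ω ∂μ, 0 < Xs ω)
    {Ψ Ψs h hs : ℝ → ℝ}
    (hΨ : ∀ x : ℝ, Ψ x = ∫ ω, Real.exp (-(X ω * x)) ∂μ)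
    (hΨs : ∀ x : ℝ, Ψs x = ∫ ω, Real.exp (-(Xs ω * x)) ∂μ)
    (hh : ∀ x : ℝ, h x = deriv (fun s => Real.log (Ψ s)) x)
    (hhs : ∀ x : ℝ, hs x = deriv (fun s => Real.log (Ψs s)) x)
    {ν : ℝ} (hν : 0 < ν) (hr : ∀ x : ℝ, 0 < x → h x = ν * hs x)
    {t : ℝ} (ht : 0 ≤ t) : Ψ t = Ψs t ^ ν := by
  rcases eq_or_lt_of_le ht with h0 | ht'
  · rw [← h0, psi_zero hX hp hΨ, psi_zero hXs hps hΨs, Real.one_rpow]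
  set G : ℝ → ℝ := fun s => Real.log (Ψ s) - ν * Real.log (Ψs s) with hGdef
  have hGd : ∀ s : ℝ, 0 < s → HasDerivAt G 0 s := by
    intro s hs'
    have hd1 := hasDerivAt_logpsi hX hp hΨ hh hs'
    have hd2 := (hasDerivAt_logpsi hXs hps hΨs hhs hs').const_mul ν
    have := hd1.sub hd2
    rw [hr s hs', sub_self] at this
    exact this
  have htend : Tendsto G (𝓝[>] (0:ℝ)) (𝓝 0) := by
    have hΨtend : Tendsto Ψ (𝓝[>] (0:ℝ)) (𝓝 1) :=
      (tendsto_I0_at_zero hX hp).congr (fun x => (hΨ x).symm)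
    have hΨstend : Tendsto Ψs (𝓝[>] (0:ℝ)) (𝓝 1) :=
      (tendsto_I0_at_zero hXs hps).congr (fun x => (hΨs x).symm)
    have hl1 : Tendsto (fun s => Real.log (Ψ s)) (𝓝[>] (0:ℝ)) (𝓝 (Real.log 1)) :=
      ((Real.continuousAt_log one_ne_zero).tendsto).comp hΨtend
    have hl2 : Tendsto (fun s => Real.log (Ψs s)) (𝓝[>] (0:ℝ)) (𝓝 (Real.log 1)) :=
      ((Real.continuousAt_log one_ne_zero).tendsto).comp hΨstend
    have := hl1.sub (hl2.const_mul ν)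
    simpa using this
  have hGconst : ∀ᶠ s in 𝓝[>] (0:ℝ), G s = G t := by
    have hIoo : Set.Ioo (0:ℝ) t ∈ 𝓝[>] (0:ℝ) :=
      Ioo_mem_nhdsGT_of_mem ⟨le_refl 0, ht'⟩
    filter_upwards [hIoo] with s hsI
    exact const_of_deriv0 G hGd hsI.1 hsI.2
  have hGt : G t = 0 := by
    have h1 : Tendsto (fun _ : ℝ => G t) (𝓝[>] (0:ℝ)) (𝓝 0) :=
      Tendsto.congr' (hGconst : G =ᶠ[𝓝[>] (0:ℝ)] fun _ => G t) htend
    exact tendsto_nhds_unique tendsto_const_nhds h1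
  have hlogeq : Real.log (Ψ t) = ν * Real.log (Ψs t) := by
    simp only [hGdef] at hGt; linarith
  rw [Real.rpow_def_of_pos (psi_pos hXs hps hΨs ht')]
  have hm : Real.log (Ψs t) * ν = Real.log (Ψ t) := by rw [hlogeq]; ring
  rw [hm, Real.exp_log (psi_pos hX hp hΨ ht')]

end SaraAux

section SaraFE



lemma sara_step1 (a A b B c C da dA db dB : ℝ → ℝ)
    (haneg : ∀ x : ℝ, 0 < x → a x < 0) (hAneg : ∀ x : ℝ, 0 < x → A x < 0)
    (hbneg : ∀ x : ℝ, 0 < x → b x < 0) (hBneg : ∀ x : ℝ, 0 < x → B x < 0)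
    (hcneg : ∀ x : ℝ, 0 < x → c x < 0) (hCneg : ∀ x : ℝ, 0 < x → C x < 0)
    (hda : ∀ x : ℝ, 0 < x → HasDerivAt a (da x) x)
    (hdA : ∀ x : ℝ, 0 < x → HasDerivAt A (dA x) x)
    (hdb : ∀ x : ℝ, 0 < x → HasDerivAt b (db x) x)
    (hdB : ∀ x : ℝ, 0 < x → HasDerivAt B (dB x) x)
    (hda0 : Tendsto da atTop (𝓝 0)) (hdA0 : Tendsto dA atTop (𝓝 0))
    (ha0 : Tendsto a atTop (𝓝 0)) (hA0 : Tendsto A atTop (𝓝 0))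
    (hdaa : Tendsto (fun x => |da x| / |a x|) atTop (𝓝 0))
    (hdAA : Tendsto (fun x => |dA x| / |A x|) atTop (𝓝 0))
    (hE : ∀ x y : ℝ, 0 < x → 0 < y →
      (a (x+y) + b x) * (A (x+y) + C y) = (A (x+y) + B x) * (a (x+y) + c y))
    {x : ℝ} (hx : 0 < x) : db x * B x = dB x * b x := by
  have hbx := hbneg x hx
  have hBx := hBneg x hx
  have key : ∀ y : ℝ, 0 < y →
      (da (x+y) + db x)/(a (x+y) + b x) + dA (x+y)/(A (x+y) + C y)
      - (dA (x+y) + dB x)/(A (x+y) + B x) - da (x+y)/(a (x+y) + c y) = 0 := by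
    intro y hy
    have hz : 0 < x + y := by linarith
    set Φ : ℝ → ℝ := fun s => Real.log (-(a (s+y) + b s)) + Real.log (-(A (s+y) + C y))
      - Real.log (-(A (s+y) + B s)) - Real.log (-(a (s+y) + c y)) with hΦdef
    have hzero : ∀ s : ℝ, 0 < s → Φ s = 0 := by
      intro s hs
      have hsz : 0 < s + y := by linarith
      have h1 : a (s+y) + b s < 0 := by have := haneg _ hsz; have := hbneg _ hs; linarith
      have h2 : A (s+y) + C y < 0 := by have := hAneg _ hsz; have := hCneg _ hy; linarith
      have h3 : A (s+y) + B s < 0 := by have := hAneg _ hsz; have := hBneg _ hs; linarith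
      have h4 : a (s+y) + c y < 0 := by have := haneg _ hsz; have := hcneg _ hy; linarith
      have hprod : (-(a (s+y) + b s)) * (-(A (s+y) + C y))
          = (-(A (s+y) + B s)) * (-(a (s+y) + c y)) := by
        rw [neg_mul_neg, neg_mul_neg]; exact hE s y hs hy
      have hlogs := congrArg Real.log hprod
      rw [Real.log_mul (neg_pos.2 h1).ne' (neg_pos.2 h2).ne',
        Real.log_mul (neg_pos.2 h3).ne' (neg_pos.2 h4).ne'] at hlogs
      simp only [hΦdef]
      linarith
    have hΦ0 : HasDerivAt Φ 0 x := by
      have hev : Φ =ᶠ[𝓝 x] fun _ => 0 := by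
        filter_upwards [Ioi_mem_nhds hx] with s hs
        exact hzero s hs
      exact (hasDerivAt_const x (0:ℝ)).congr_of_eventuallyEq hev
    have h1 : a (x+y) + b x < 0 := by have := haneg _ hz; linarith
    have h2 : A (x+y) + C y < 0 := by have := hAneg _ hz; have := hCneg _ hy; linarith
    have h3 : A (x+y) + B x < 0 := by have := hAneg _ hz; linarith
    have h4 : a (x+y) + c y < 0 := by have := haneg _ hz; have := hcneg _ hy; linarith
    have hshifta : HasDerivAt (fun s : ℝ => a (s+y)) (da (x+y)) x := by
      have := (hda (x+y) hz).comp x ((hasDerivAt_id x).add_const y)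
      simpa [Function.comp_def] using this
    have hshiftA : HasDerivAt (fun s : ℝ => A (s+y)) (dA (x+y)) x := by
      have := (hdA (x+y) hz).comp x ((hasDerivAt_id x).add_const y)
      simpa [Function.comp_def] using this
    have hlog1 : HasDerivAt (fun s => Real.log (-(a (s+y) + b s)))
        ((da (x+y) + db x)/(a (x+y) + b x)) x := by
      have hd := ((hshifta.add (hdb x hx)).neg).log (neg_pos.2 h1).ne'
      convert hd using 1
      · rfl
      · simp only [Pi.neg_apply, Pi.add_apply, neg_div_neg_eq]
    have hlog2 : HasDerivAt (fun s => Real.log (-(A (s+y) + C y)))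
        (dA (x+y)/(A (x+y) + C y)) x := by
      have hd := ((hshiftA.add_const (C y)).neg).log (neg_pos.2 h2).ne'
      convert hd using 1
      · rfl
      · simp only [Pi.neg_apply, Pi.add_apply, neg_div_neg_eq]
    have hlog3 : HasDerivAt (fun s => Real.log (-(A (s+y) + B s)))
        ((dA (x+y) + dB x)/(A (x+y) + B x)) x := by
      have hd := ((hshiftA.add (hdB x hx)).neg).log (neg_pos.2 h3).ne'
      convert hd using 1
      · rfl
      · simp only [Pi.neg_apply, Pi.add_apply, neg_div_neg_eq]
    have hlog4 : HasDerivAt (fun s => Real.log (-(a (s+y) + c y)))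
        (da (x+y)/(a (x+y) + c y)) x := by
      have hd := ((hshifta.add_const (c y)).neg).log (neg_pos.2 h4).ne'
      convert hd using 1
      · rfl
      · simp only [Pi.neg_apply, Pi.add_apply, neg_div_neg_eq]
    have htotal : HasDerivAt Φ
        ((da (x+y) + db x)/(a (x+y) + b x) + dA (x+y)/(A (x+y) + C y)
        - (dA (x+y) + dB x)/(A (x+y) + B x) - da (x+y)/(a (x+y) + c y)) x :=
      ((hlog1.add hlog2).sub hlog3).sub hlog4
    exact htotal.unique hΦ0
  -- limits as y → ∞
  have hcomp : Tendsto (fun y : ℝ => x + y) atTop atTop :=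
    tendsto_atTop_add_const_left atTop x tendsto_id
  have t1 : Tendsto (fun y => (da (x+y) + db x)/(a (x+y) + b x)) atTop (𝓝 (db x / b x)) := by
    have tn : Tendsto (fun y => da (x+y) + db x) atTop (𝓝 (0 + db x)) :=
      (hda0.comp hcomp).add_const (db x)
    have td : Tendsto (fun y => a (x+y) + b x) atTop (𝓝 (0 + b x)) :=
      (ha0.comp hcomp).add_const (b x)
    have := tn.div td (by rw [zero_add]; exact hbx.ne)
    simpa [Pi.div_def] using this
  have t3 : Tendsto (fun y => (dA (x+y) + dB x)/(A (x+y) + B x)) atTop (𝓝 (dB x / B x)) := by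
    have tn : Tendsto (fun y => dA (x+y) + dB x) atTop (𝓝 (0 + dB x)) :=
      (hdA0.comp hcomp).add_const (dB x)
    have td : Tendsto (fun y => A (x+y) + B x) atTop (𝓝 (0 + B x)) :=
      (hA0.comp hcomp).add_const (B x)
    have := tn.div td (by rw [zero_add]; exact hBx.ne)
    simpa [Pi.div_def] using this
  have t2 : Tendsto (fun y => dA (x+y)/(A (x+y) + C y)) atTop (𝓝 0) := by
    apply squeeze_zero_norm' (a := fun y => |dA (x+y)| / |A (x+y)|)
    · filter_upwards [eventually_gt_atTop (0:ℝ)] with y hy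
      have hz : 0 < x + y := by linarith
      have hAz := hAneg _ hz
      have hCy := hCneg _ hy
      rw [Real.norm_eq_abs, abs_div]
      apply div_le_div_of_nonneg_left (abs_nonneg _) (abs_pos.2 hAz.ne)
      rw [abs_of_neg hAz, abs_of_neg (by linarith : A (x+y) + C y < 0)]
      linarith
    · exact hdAA.comp hcomp
  have t4 : Tendsto (fun y => da (x+y)/(a (x+y) + c y)) atTop (𝓝 0) := by
    apply squeeze_zero_norm' (a := fun y => |da (x+y)| / |a (x+y)|)
    · filter_upwards [eventually_gt_atTop (0:ℝ)] with y hy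
      have hz : 0 < x + y := by linarith
      have haz := haneg _ hz
      have hcy := hcneg _ hy
      rw [Real.norm_eq_abs, abs_div]
      apply div_le_div_of_nonneg_left (abs_nonneg _) (abs_pos.2 haz.ne)
      rw [abs_of_neg haz, abs_of_neg (by linarith : a (x+y) + c y < 0)]
      linarith
    · exact hdaa.comp hcomp
  have tsum : Tendsto (fun y => (da (x+y) + db x)/(a (x+y) + b x) + dA (x+y)/(A (x+y) + C y)
      - (dA (x+y) + dB x)/(A (x+y) + B x) - da (x+y)/(a (x+y) + c y)) atTop
      (𝓝 (db x / b x + 0 - dB x / B x - 0)) := ((t1.add t2).sub t3).sub t4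
  have tzero : Tendsto (fun _ : ℝ => (0:ℝ)) atTop (𝓝 (db x / b x + 0 - dB x / B x - 0)) := by
    apply tsum.congr'
    filter_upwards [eventually_gt_atTop (0:ℝ)] with y hy
    exact key y hy
  have hval : db x / b x + 0 - dB x / B x - 0 = 0 :=
    (tendsto_nhds_unique tzero tendsto_const_nhds)
  have : db x / b x = dB x / B x := by linarith
  rw [div_eq_div_iff hbx.ne hBx.ne] at this
  linarith

lemma sara_part2 (a A b B c C da dA db dB dc dC : ℝ → ℝ)
    (haneg : ∀ x : ℝ, 0 < x → a x < 0) (hAneg : ∀ x : ℝ, 0 < x → A x < 0)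
    (hbneg : ∀ x : ℝ, 0 < x → b x < 0) (hBneg : ∀ x : ℝ, 0 < x → B x < 0)
    (hcneg : ∀ x : ℝ, 0 < x → c x < 0) (hCneg : ∀ x : ℝ, 0 < x → C x < 0)
    (hda : ∀ x : ℝ, 0 < x → HasDerivAt a (da x) x)
    (hdA : ∀ x : ℝ, 0 < x → HasDerivAt A (dA x) x)
    (hdb : ∀ x : ℝ, 0 < x → HasDerivAt b (db x) x)
    (hdB : ∀ x : ℝ, 0 < x → HasDerivAt B (dB x) x)
    (hdc : ∀ x : ℝ, 0 < x → HasDerivAt c (dc x) x)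
    (hdC : ∀ x : ℝ, 0 < x → HasDerivAt C (dC x) x)
    (hda0 : Tendsto da atTop (𝓝 0)) (hdA0 : Tendsto dA atTop (𝓝 0))
    (ha0 : Tendsto a atTop (𝓝 0)) (hA0 : Tendsto A atTop (𝓝 0))
    (hdaa : Tendsto (fun x => |da x| / |a x|) atTop (𝓝 0))
    (hdAA : Tendsto (fun x => |dA x| / |A x|) atTop (𝓝 0))
    (hdBpos : ∀ x : ℝ, 0 < x → 0 < dB x) (hdCpos : ∀ x : ℝ, 0 < x → 0 < dC x)
    (hE : ∀ x y : ℝ, 0 < x → 0 < y →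
      (a (x+y) + b x) * (A (x+y) + C y) = (A (x+y) + B x) * (a (x+y) + c y)) :
    ∃ ν : ℝ, 0 < ν ∧ (∀ x : ℝ, 0 < x → a x = ν * A x) ∧
      (∀ x : ℝ, 0 < x → b x = ν * B x) ∧ (∀ x : ℝ, 0 < x → c x = ν * C x) := by
  -- Step 1 for b/B
  have hwb : ∀ x : ℝ, 0 < x → db x * B x = dB x * b x := fun x hx =>
    sara_step1 a A b B c C da dA db dB haneg hAneg hbneg hBneg hcneg hCneg
      hda hdA hdb hdB hda0 hdA0 ha0 hA0 hdaa hdAA hE hx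
  -- Step 1 for c/C via the swapped equation
  have hEswap : ∀ x y : ℝ, 0 < x → 0 < y →
      (a (x+y) + c x) * (A (x+y) + B y) = (A (x+y) + C x) * (a (x+y) + b y) := by
    intro x y hx hy
    have h := hE y x hy hx
    rw [add_comm y x] at h
    linear_combination -h
  have hwc : ∀ x : ℝ, 0 < x → dc x * C x = dC x * c x := fun x hx =>
    sara_step1 a A c C b B da dA dc dC haneg hAneg hcneg hCneg hbneg hBneg
      hda hdA hdc hdC hda0 hdA0 ha0 hA0 hdaa hdAA hEswap hx
  -- constancy of ratios
  have hconst : ∀ (f F df dF : ℝ → ℝ), (∀ x : ℝ, 0 < x → F x < 0) →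
      (∀ x : ℝ, 0 < x → HasDerivAt f (df x) x) → (∀ x : ℝ, 0 < x → HasDerivAt F (dF x) x) →
      (∀ x : ℝ, 0 < x → df x * F x = dF x * f x) →
      ∀ x : ℝ, 0 < x → f x / F x = f 1 / F 1 := by
    intro f F df dF hFneg hdf hdF hw x hx
    have hq : ∀ u : ℝ, 0 < u → HasDerivAt (fun v => f v / F v) 0 u := by
      intro u hu
      have hFu := (hFneg u hu).ne
      have hd := (hdf u hu).div (hdF u hu) hFu
      convert hd using 1
      · rfl
      · rfl
      · rfl
      have := hw u hu
      field_simp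
      linarith
    rcases lt_trichotomy x 1 with h | h | h
    · exact const_of_deriv0 _ hq hx h
    · rw [h]
    · exact (const_of_deriv0 _ hq one_pos h).symm
  set ν₁ := b 1 / B 1 with hν₁def
  set ν₂ := c 1 / C 1 with hν₂def
  have hν₁pos : 0 < ν₁ := div_pos_of_neg_of_neg (hbneg 1 one_pos) (hBneg 1 one_pos)
  have hν₂pos : 0 < ν₂ := div_pos_of_neg_of_neg (hcneg 1 one_pos) (hCneg 1 one_pos)
  have hb : ∀ x : ℝ, 0 < x → b x = ν₁ * B x := by
    intro x hx
    have h := hconst b B db dB hBneg hdb hdB hwb x hx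
    rw [div_eq_iff (hBneg x hx).ne] at h
    rw [h]
  have hc : ∀ x : ℝ, 0 < x → c x = ν₂ * C x := by
    intro x hx
    have h := hconst c C dc dC hCneg hdc hdC hwc x hx
    rw [div_eq_iff (hCneg x hx).ne] at h
    rw [h]
  -- the reduced equation
  have hE3 : ∀ x y : ℝ, 0 < x → 0 < y →
      (a (x+y) - ν₂ * A (x+y)) / B x + (ν₁ - ν₂) = (a (x+y) - ν₁ * A (x+y)) / C y := by
    intro x y hx hy
    have h := hE x y hx hy
    rw [hb x hx, hc y hy] at h
    have hBx := (hBneg x hx).ne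
    have hCy := (hCneg y hy).ne
    field_simp
    linear_combination h
  set d := ν₁ - ν₂ with hddef
  -- limits
  have hT1 : Tendsto (fun z => (a z - ν₁ * A z) / C (z-1)) atTop (𝓝 d) := by
    have hl : Tendsto (fun z => (a z - ν₂ * A z) / B 1 + d) atTop (𝓝 (0 + d)) := by
      apply Tendsto.add_const
      have : Tendsto (fun z => a z - ν₂ * A z) atTop (𝓝 0) := by
        have := ha0.sub (hA0.const_mul ν₂)
        simpa using this
      simpa using this.div_const (B 1)
    rw [zero_add] at hl
    apply hl.congr'
    filter_upwards [eventually_gt_atTop (1:ℝ)] with z hz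
    have h := hE3 1 (z-1) one_pos (by linarith)
    rw [show (1:ℝ) + (z-1) = z by ring] at h
    exact h
  have hT2 : Tendsto (fun z => (a z - ν₂ * A z) / B (z-1)) atTop (𝓝 (-d)) := by
    have hl : Tendsto (fun z => (a z - ν₁ * A z) / C 1 - d) atTop (𝓝 (0 - d)) := by
      apply Tendsto.sub_const
      have : Tendsto (fun z => a z - ν₁ * A z) atTop (𝓝 0) := by
        have := ha0.sub (hA0.const_mul ν₁)
        simpa using this
      simpa using this.div_const (C 1)
    rw [zero_sub] at hl
    apply hl.congr'
    filter_upwards [eventually_gt_atTop (1:ℝ)] with z hz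
    have h := hE3 (z-1) 1 (by linarith) one_pos
    rw [show z - 1 + (1:ℝ) = z by ring] at h
    linarith [h]
  -- d = 0
  have hd0 : d = 0 := by
    by_contra hd
    have hiden : ∀ z : ℝ, 1 < z →
        ((a z - ν₁ * A z) / C (z-1)) * C (z-1) - ((a z - ν₂ * A z) / B (z-1)) * B (z-1)
          = -d * A z := by
      intro z hz
      have hC := (hCneg (z-1) (by linarith)).ne
      have hB := (hBneg (z-1) (by linarith)).ne
      rw [div_mul_cancel₀ _ hC, div_mul_cancel₀ _ hB]
      rw [hddef]; ring
    rcases lt_or_gt_of_ne hd with hdneg | hdpos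
    · -- d < 0
      have hu : ∀ᶠ z in atTop, (a z - ν₁ * A z) / C (z-1) < d/2 :=
        hT1.eventually (eventually_lt_nhds (by linarith))
      have hv : ∀ᶠ z in atTop, -d/2 < (a z - ν₂ * A z) / B (z-1) :=
        hT2.eventually (eventually_gt_nhds (by linarith))
      obtain ⟨z, hz1, hu1, hv1⟩ := ((eventually_gt_atTop (1:ℝ)).and (hu.and hv)).exists
      have hC' := hCneg (z-1) (by linarith)
      have hB' := hBneg (z-1) (by linarith)
      have hA := hAneg z (by linarith)
      have hid := hiden z hz1
      have p1 := mul_lt_mul_of_neg_right hu1 hC'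
      have p2 := mul_lt_mul_of_neg_right hv1 hB'
      have p3 : -d * A z < 0 := mul_neg_of_pos_of_neg (by linarith) hA
      nlinarith [mul_pos_of_neg_of_neg (show d/2 < 0 by linarith)
        (show C (z-1) + B (z-1) < 0 by linarith)]
    · -- d > 0
      have hu : ∀ᶠ z in atTop, d/2 < (a z - ν₁ * A z) / C (z-1) :=
        hT1.eventually (eventually_gt_nhds (by linarith))
      have hv : ∀ᶠ z in atTop, (a z - ν₂ * A z) / B (z-1) < -d/2 :=
        hT2.eventually (eventually_lt_nhds (by linarith))
      obtain ⟨z, hz1, hu1, hv1⟩ := ((eventually_gt_atTop (1:ℝ)).and (hu.and hv)).exists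
      have hC' := hCneg (z-1) (by linarith)
      have hB' := hBneg (z-1) (by linarith)
      have hA := hAneg z (by linarith)
      have hid := hiden z hz1
      have p1 := mul_lt_mul_of_neg_right hu1 hC'
      have p2 := mul_lt_mul_of_neg_right hv1 hB'
      have p3 : 0 < -d * A z := mul_pos_of_neg_of_neg (by linarith) hA
      nlinarith [mul_neg_of_pos_of_neg (show 0 < d/2 by linarith)
        (show C (z-1) + B (z-1) < 0 by linarith)]
  -- now α ≡ 0
  have hν12 : ν₁ = ν₂ := by rw [hddef] at hd0; linarith
  have halpha : ∀ z : ℝ, 0 < z → a z - ν₁ * A z = 0 := by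
    intro z hz
    by_contra hαz
    have hBC : ∀ x y : ℝ, 0 < x → 0 < y → x + y = z → B x = C y := by
      intro x y hx hy hxy
      have h := hE3 x y hx hy
      rw [hxy, hd0, add_zero, hν12] at h
      have hα : a z - ν₂ * A z ≠ 0 := by rw [← hν12]; exact hαz
      have hBx := (hBneg x hx).ne
      have hCy := (hCneg y hy).ne
      rw [div_eq_div_iff hBx hCy] at h
      exact (mul_left_cancel₀ hα h).symm
    have e1 : B (z/4) = C (3*z/4) := hBC (z/4) (3*z/4) (by linarith) (by linarith) (by ring)
    have e2 : B (z/2) = C (z/2) := hBC (z/2) (z/2) (by linarith) (by linarith) (by ring)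
    have m1 : B (z/4) < B (z/2) := strict_mono_aux B dB hdB hdBpos (by linarith) (by linarith)
    have m2 : C (z/2) < C (3*z/4) := strict_mono_aux C dC hdC hdCpos (by linarith) (by linarith)
    linarith
  refine ⟨ν₁, hν₁pos, ?_, hb, by rw [hν12]; exact hc⟩
  intro x hx
  have := halpha x hx
  linarith

end SaraFE

/-- General-case Proposition (Appendix E.4): for the SARA model with a common stochastic
taste parameter, if two specifications (with all components a.s. strictly positive and
with support `(0,∞)`) yield the same marginal rate of substitution everywhere — the
cross-multiplied equation below, where `h = (log Ψ)'` — then their Laplace transforms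
are related by a common positive power transformation on `[0,∞)`. -/
theorem sara_common_identification_from_mrs {Ω : Type*} [MeasurableSpace Ω]
    (μ : Measure Ω) [IsProbabilityMeasure μ]
    (Ac A₁ A₂ Acs A₁s A₂s : Ω → ℝ)
    (hAc : Measurable Ac) (hA₁ : Measurable A₁) (hA₂ : Measurable A₂)
    (hAcs : Measurable Acs) (hA₁s : Measurable A₁s) (hA₂s : Measurable A₂s)
    (hposc : ∀ᵐ ω ∂μ, 0 < Ac ω) (hpos₁ : ∀ᵐ ω ∂μ, 0 < A₁ ω) (hpos₂ : ∀ᵐ ω ∂μ, 0 < A₂ ω)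
    (hposcs : ∀ᵐ ω ∂μ, 0 < Acs ω) (hpos₁s : ∀ᵐ ω ∂μ, 0 < A₁s ω)
    (hpos₂s : ∀ᵐ ω ∂μ, 0 < A₂s ω)
    -- support equal to (0,∞): every open subinterval of (0,∞) has positive probability
    (hsuppc : ∀ s t : ℝ, 0 ≤ s → s < t → 0 < μ {ω | Ac ω ∈ Set.Ioo s t})
    (hsupp₁ : ∀ s t : ℝ, 0 ≤ s → s < t → 0 < μ {ω | A₁ ω ∈ Set.Ioo s t})
    (hsupp₂ : ∀ s t : ℝ, 0 ≤ s → s < t → 0 < μ {ω | A₂ ω ∈ Set.Ioo s t})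
    (hsuppcs : ∀ s t : ℝ, 0 ≤ s → s < t → 0 < μ {ω | Acs ω ∈ Set.Ioo s t})
    (hsupp₁s : ∀ s t : ℝ, 0 ≤ s → s < t → 0 < μ {ω | A₁s ω ∈ Set.Ioo s t})
    (hsupp₂s : ∀ s t : ℝ, 0 ≤ s → s < t → 0 < μ {ω | A₂s ω ∈ Set.Ioo s t})
    (Ψc Ψ₁ Ψ₂ Ψcs Ψ₁s Ψ₂s : ℝ → ℝ)
    (hΨc : ∀ x : ℝ, Ψc x = ∫ ω, Real.exp (-(Ac ω * x)) ∂μ)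
    (hΨ₁ : ∀ x : ℝ, Ψ₁ x = ∫ ω, Real.exp (-(A₁ ω * x)) ∂μ)
    (hΨ₂ : ∀ x : ℝ, Ψ₂ x = ∫ ω, Real.exp (-(A₂ ω * x)) ∂μ)
    (hΨcs : ∀ x : ℝ, Ψcs x = ∫ ω, Real.exp (-(Acs ω * x)) ∂μ)
    (hΨ₁s : ∀ x : ℝ, Ψ₁s x = ∫ ω, Real.exp (-(A₁s ω * x)) ∂μ)
    (hΨ₂s : ∀ x : ℝ, Ψ₂s x = ∫ ω, Real.exp (-(A₂s ω * x)) ∂μ)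
    (hc h₁ h₂ hcs h₁s h₂s : ℝ → ℝ)
    (hhc : ∀ x : ℝ, hc x = deriv (fun s => Real.log (Ψc s)) x)
    (hh₁ : ∀ x : ℝ, h₁ x = deriv (fun s => Real.log (Ψ₁ s)) x)
    (hh₂ : ∀ x : ℝ, h₂ x = deriv (fun s => Real.log (Ψ₂ s)) x)
    (hhcs : ∀ x : ℝ, hcs x = deriv (fun s => Real.log (Ψcs s)) x)
    (hh₁s : ∀ x : ℝ, h₁s x = deriv (fun s => Real.log (Ψ₁s s)) x)
    (hh₂s : ∀ x : ℝ, h₂s x = deriv (fun s => Real.log (Ψ₂s s)) x)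
    (heq : ∀ x₁ x₂ : ℝ, 0 ≤ x₁ → 0 ≤ x₂ →
      (hc (x₁ + x₂) + h₁ x₁) * (hcs (x₁ + x₂) + h₂s x₂) =
      (hcs (x₁ + x₂) + h₁s x₁) * (hc (x₁ + x₂) + h₂ x₂)) :
    ∃ ν : ℝ, 0 < ν ∧ ∀ t : ℝ, 0 ≤ t →
      Ψc t = Ψcs t ^ ν ∧ Ψ₁ t = Ψ₁s t ^ ν ∧ Ψ₂ t = Ψ₂s t ^ ν := by
  have hE : ∀ x y : ℝ, 0 < x → 0 < y →
      (hc (x+y) + h₁ x) * (hcs (x+y) + h₂s y) = (hcs (x+y) + h₁s x) * (hc (x+y) + h₂ y) :=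
    fun x y hx hy => heq x y hx.le hy.le
  obtain ⟨ν, hνpos, hra, hrb, hrc⟩ := sara_part2 hc hcs h₁ h₁s h₂ h₂s
    (dhF μ Ac) (dhF μ Acs) (dhF μ A₁) (dhF μ A₁s) (dhF μ A₂) (dhF μ A₂s)
    (fun x hx => h_neg hAc hposc hΨc hhc hx)
    (fun x hx => h_neg hAcs hposcs hΨcs hhcs hx)
    (fun x hx => h_neg hA₁ hpos₁ hΨ₁ hh₁ hx)
    (fun x hx => h_neg hA₁s hpos₁s hΨ₁s hh₁s hx)
    (fun x hx => h_neg hA₂ hpos₂ hΨ₂ hh₂ hx)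
    (fun x hx => h_neg hA₂s hpos₂s hΨ₂s hh₂s hx)
    (fun x hx => hasDerivAt_h hAc hposc hΨc hhc hx)
    (fun x hx => hasDerivAt_h hAcs hposcs hΨcs hhcs hx)
    (fun x hx => hasDerivAt_h hA₁ hpos₁ hΨ₁ hh₁ hx)
    (fun x hx => hasDerivAt_h hA₁s hpos₁s hΨ₁s hh₁s hx)
    (fun x hx => hasDerivAt_h hA₂ hpos₂ hΨ₂ hh₂ hx)
    (fun x hx => hasDerivAt_h hA₂s hpos₂s hΨ₂s hh₂s hx)
    (dh_tendsto hAc hposc hsuppc hΨc hhc)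
    (dh_tendsto hAcs hposcs hsuppcs hΨcs hhcs)
    (h_tendsto hAc hposc hsuppc hΨc hhc)
    (h_tendsto hAcs hposcs hsuppcs hΨcs hhcs)
    (dh_ratio_tendsto hAc hposc hsuppc hΨc hhc)
    (dh_ratio_tendsto hAcs hposcs hsuppcs hΨcs hhcs)
    (fun x hx => dh_pos hA₁s hpos₁s hsupp₁s hΨ₁s hh₁s hx)
    (fun x hx => dh_pos hA₂s hpos₂s hsupp₂s hΨ₂s hh₂s hx)
    hE
  refine ⟨ν, hνpos, fun t ht => ⟨?_, ?_, ?_⟩⟩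
  · exact sara_step5 hAc hposc hAcs hposcs hΨc hΨcs hhc hhcs hνpos hra ht
  · exact sara_step5 hA₁ hpos₁ hA₁s hpos₁s hΨ₁ hΨ₁s hh₁ hh₁s hνpos hrb ht
  · exact sara_step5 hA₂ hpos₂ hA₂s hpos₂s hΨ₂ hΨ₂s hh₂ hh₂s hνpos hrc ht
end

section
/- Let (A₁, A₂) be a random vector with values in [0,∞)² with E[A₁] < ∞, and let x₁, x₂ ≥ 0. Suppose P(x₁ + A₁·x₂ = A₂) = 0. Then the function t ↦ E[min(t + A₁·x₂, A₂)] is differentiable at t = x₁, and its derivative there equals P(x₁ + A₁·x₂ < A₂). -/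
open MeasureTheory

/-- First partial derivative of the SSF utility (Section 3.1): if `(A₁,A₂)` takes values
in `[0,∞)²`, `E[A₁] < ∞`, and `P(x₁ + A₁x₂ = A₂) = 0`, then
`t ↦ E[min(t + A₁x₂, A₂)]` is differentiable at `x₁` with derivative
`P(x₁ + A₁x₂ < A₂)`. -/
theorem ssf_partial_deriv {Ω : Type*} [MeasurableSpace Ω]
    (μ : Measure Ω) [IsProbabilityMeasure μ]
    (A₁ A₂ : Ω → ℝ) (hA₁ : Measurable A₁) (hA₂ : Measurable A₂)
    (hpos : ∀ ω, 0 ≤ A₁ ω ∧ 0 ≤ A₂ ω)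
    (hint : Integrable A₁ μ)
    (x₁ x₂ : ℝ) (hx₁ : 0 ≤ x₁) (hx₂ : 0 ≤ x₂)
    (hnull : μ {ω | x₁ + A₁ ω * x₂ = A₂ ω} = 0) :
    HasDerivAt (fun t => ∫ ω, min (t + A₁ ω * x₂) (A₂ ω) ∂μ)
      ((μ {ω | x₁ + A₁ ω * x₂ < A₂ ω}).toReal) x₁ := by
  set s : Set Ω := {ω | x₁ + A₁ ω * x₂ < A₂ ω} with hs
  have hsmeas : MeasurableSet s :=
    measurableSet_lt ((measurable_const.add (hA₁.mul measurable_const))) hA₂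
  set F' : Ω → ℝ := s.indicator (fun _ => (1:ℝ)) with hF'
  have key : HasDerivAt (fun t => ∫ ω, min (t + A₁ ω * x₂) (A₂ ω) ∂μ)
      (∫ ω, F' ω ∂μ) x₁ := by
    refine (hasDerivAt_integral_of_dominated_loc_of_lip
      (F := fun t ω => min (t + A₁ ω * x₂) (A₂ ω))
      (bound := fun _ => (1:ℝ)) (s := Set.univ) Filter.univ_mem ?_ ?_ ?_ ?_ ?_ ?_).2
    · filter_upwards with t
      exact ((measurable_const.add (hA₁.mul measurable_const)).min hA₂).aestronglyMeasurable
    · -- integrability at x₁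
      have hmeas : AEStronglyMeasurable (fun ω => min (x₁ + A₁ ω * x₂) (A₂ ω)) μ :=
        ((measurable_const.add (hA₁.mul measurable_const)).min hA₂).aestronglyMeasurable
      have hbd : Integrable (fun ω => x₁ + A₁ ω * x₂) μ :=
        (integrable_const x₁).add (hint.mul_const x₂)
      refine hbd.mono hmeas ?_
      filter_upwards with ω
      have h1 := (hpos ω).1
      have h2 := (hpos ω).2
      have hnn : 0 ≤ min (x₁ + A₁ ω * x₂) (A₂ ω) :=
        le_min (by positivity) h2
      rw [Real.norm_eq_abs, Real.norm_eq_abs, abs_of_nonneg hnn,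
        abs_of_nonneg (by positivity : (0:ℝ) ≤ x₁ + A₁ ω * x₂)]
      exact min_le_left _ _
    · exact (measurable_const.indicator hsmeas).aestronglyMeasurable
    · -- Lipschitz
      filter_upwards with ω
      have hlip : LipschitzWith 1 (fun t : ℝ => min (t + A₁ ω * x₂) (A₂ ω)) := by
        refine LipschitzWith.of_dist_le_mul fun a b => ?_
        simp only [Real.dist_eq, NNReal.coe_one, one_mul]
        calc |min (a + A₁ ω * x₂) (A₂ ω) - min (b + A₁ ω * x₂) (A₂ ω)|
            ≤ max |a + A₁ ω * x₂ - (b + A₁ ω * x₂)| |A₂ ω - A₂ ω| :=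
              abs_min_sub_min_le_max _ _ _ _
          _ ≤ |a - b| := by
              simp only [add_sub_add_right_eq_sub, sub_self, abs_zero]
              exact max_le le_rfl (abs_nonneg _)
      have h1 : Real.nnabs (1:ℝ) = 1 := by simp
      rw [h1]
      exact hlip.lipschitzOnWith
    · exact integrable_const 1
    · -- a.e. differentiability
      have hne : ∀ᵐ ω ∂μ, x₁ + A₁ ω * x₂ ≠ A₂ ω := by
        rw [ae_iff]
        simpa using hnull
      filter_upwards [hne] with ω hω
      rcases lt_or_gt_of_ne hω with h | h
      · -- min = t + a₁x₂ near x₁, derivative 1, ω ∈ s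
        have hmem : ω ∈ s := h
        have hF'1 : F' ω = 1 := by simp [hF', Set.indicator_of_mem hmem]
        rw [hF'1]
        have hev : ∀ᶠ t in nhds x₁, min (t + A₁ ω * x₂) (A₂ ω) = t + A₁ ω * x₂ := by
          have hcont : Continuous (fun t : ℝ => t + A₁ ω * x₂) := by continuity
          have : ∀ᶠ t in nhds x₁, t + A₁ ω * x₂ < A₂ ω :=
            (hcont.continuousAt).eventually_lt continuousAt_const h
          filter_upwards [this] with t ht
          exact min_eq_left ht.le
        have hd : HasDerivAt (fun t : ℝ => t + A₁ ω * x₂) 1 x₁ :=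
          (hasDerivAt_id x₁).add_const _
        exact hd.congr_of_eventuallyEq (by filter_upwards [hev] with t ht using ht)
      · have hnmem : ω ∉ s := by simp [hs, not_lt.mpr h.le]
        have hF'0 : F' ω = 0 := by simp [hF', Set.indicator_of_notMem hnmem]
        rw [hF'0]
        have hev : ∀ᶠ t in nhds x₁, min (t + A₁ ω * x₂) (A₂ ω) = A₂ ω := by
          have hcont : Continuous (fun t : ℝ => t + A₁ ω * x₂) := by continuity
          have : ∀ᶠ t in nhds x₁, A₂ ω < t + A₁ ω * x₂ :=
            continuousAt_const.eventually_lt hcont.continuousAt h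
          filter_upwards [this] with t ht
          exact min_eq_right ht.le
        exact (hasDerivAt_const x₁ (A₂ ω)).congr_of_eventuallyEq
          (by filter_upwards [hev] with t ht using ht)
  have hint' : ∫ ω, F' ω ∂μ = (μ s).toReal := by
    show ∫ ω, s.indicator (fun _ => (1:ℝ)) ω ∂μ = (μ s).toReal
    exact integral_indicator_one hsmeas
  rwa [hint'] at key
end

section
/- Let (A₁, A₂) be a random vector with values in [0,∞)² with E[A₁] < ∞, and let p, y be real numbers. Then the function h : ℝ → ℝ defined by h(t) = E[(1 - p·A₁) · 1{t·(1 - p·A₁) + A₁·y - A₂ < 0}] is antitone (nonincreasing) on ℝ. -/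
open MeasureTheory

/-- Core of Proposition 4: the SSF first-order-condition function
`h(t) = E[(1 - pA₁)·1{t(1 - pA₁) + A₁y - A₂ < 0}]` is nonincreasing on `ℝ`. -/
theorem ssf_foc_antitone {Ω : Type*} [MeasurableSpace Ω]
    (μ : Measure Ω) [IsProbabilityMeasure μ]
    (A₁ A₂ : Ω → ℝ) (hA₁ : Measurable A₁) (hA₂ : Measurable A₂)
    (hpos : ∀ ω, 0 ≤ A₁ ω ∧ 0 ≤ A₂ ω)
    (hint : Integrable A₁ μ)
    (p y : ℝ)
    (h : ℝ → ℝ)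
    (hh : ∀ t : ℝ, h t = ∫ ω,
        (if t * (1 - p * A₁ ω) + A₁ ω * y - A₂ ω < 0 then 1 - p * A₁ ω else 0) ∂μ) :
    Antitone h := by
  have hintall : ∀ t : ℝ, Integrable
      (fun ω => (if t * (1 - p * A₁ ω) + A₁ ω * y - A₂ ω < 0 then 1 - p * A₁ ω else 0)) μ := by
    intro t
    have hmeas : Measurable
        (fun ω => (if t * (1 - p * A₁ ω) + A₁ ω * y - A₂ ω < 0 then 1 - p * A₁ ω else 0)) := by
      apply Measurable.ite _ (by fun_prop) measurable_const
      exact measurableSet_lt (by fun_prop) measurable_const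
    have hbound : Integrable (fun ω => 1 + |p| * |A₁ ω|) μ :=
      (integrable_const (1:ℝ)).add (hint.abs.const_mul _)
    refine hbound.mono' hmeas.aestronglyMeasurable (Filter.Eventually.of_forall fun ω => ?_)
    by_cases hc : t * (1 - p * A₁ ω) + A₁ ω * y - A₂ ω < 0 <;> simp only [hc, if_pos, if_neg,
      if_true, if_false]
    · calc |1 - p * A₁ ω| ≤ |(1:ℝ)| + |p * A₁ ω| := abs_sub _ _
        _ = 1 + |p| * |A₁ ω| := by rw [abs_one, abs_mul]
    · simp only [norm_zero]; positivity
  intro s t hst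
  rw [hh s, hh t]
  refine integral_mono (hintall t) (hintall s) fun ω => ?_
  set c := 1 - p * A₁ ω with hc
  set d := A₁ ω * y - A₂ ω with hd
  have e1 : t * (1 - p * A₁ ω) + A₁ ω * y - A₂ ω = t * c + d := by ring
  have e2 : s * (1 - p * A₁ ω) + A₁ ω * y - A₂ ω = s * c + d := by ring
  simp only [e1, e2]
  rcases le_or_gt 0 c with hc0 | hc0
  · split_ifs with h1 h2 h2
    · exact le_refl _
    · exact absurd (by nlinarith : s * c + A₁ ω * y - A₂ ω < 0) h2
    · exact hc0
    · exact le_refl _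
  · split_ifs with h1 h2 h2
    · exact le_refl _
    · exact hc0.le
    · exact absurd (by nlinarith : t * c + A₁ ω * y - A₂ ω < 0) h1
    · exact le_refl _
end
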